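/- arXiv:2207.00700 — 7 statements merged into one kernel-verified Lean document; each statement's English description precedes it below -/
import Mathlib

section
/- Let Q : [0,∞) → ℝ be continuous on (0,∞) and bounded below, with Q(0) = 0, and suppose there exist constants c > 0 and ε > 0 such that Q(t) ≥ c·t⁻² for all t ∈ (0, ε]. Let h : ℝ → ℝ be continuous, nonnegative and not identically zero, and let g : ℝ → ℝ be locally square-integrable with h(y) − h(x) = ∫ₓʸ g(t) dt for all x ≤ y. If the energy E[h] = ∫_{{h>0}} (½ g(x)² + Q(h(x))) dx is finite, then h(x) > 0 for every x ∈ ℝ. -/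
open MeasureTheory Filter Set Topology


lemma bound_aux (g : ℝ → ℝ) (u v K s : ℝ) (huv : u ≤ v) (hs : 0 < s)
    (hg : IntegrableOn (fun t => (g t) ^ 2) (Set.Icc u v))
    (hK : (∫ t in Set.Ioc u v, (g t) ^ 2) ≤ K) :
    (∫ t in u..v, g t) ≤ ((v - u) * s ^ 2 + K) / (2 * s) := by
  have hKnn : 0 ≤ K :=
    le_trans (setIntegral_nonneg measurableSet_Ioc fun t _ => sq_nonneg _) hK
  by_cases hgi : IntervalIntegrable g volume u v
  · have hg2 : IntervalIntegrable (fun t => (g t) ^ 2) volume u v :=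
      (intervalIntegrable_iff_integrableOn_Ioc_of_le huv).2
        (hg.mono_set Set.Ioc_subset_Icc_self)
    have hbig : IntervalIntegrable (fun t => (s ^ 2 + (g t) ^ 2) / (2 * s)) volume u v := by
      apply IntervalIntegrable.div_const
      exact (intervalIntegrable_const).add hg2
    have hmono : (∫ t in u..v, g t) ≤ ∫ t in u..v, (s ^ 2 + (g t) ^ 2) / (2 * s) := by
      apply intervalIntegral.integral_mono_on huv hgi hbig
      intro x _
      rw [le_div_iff₀ (by positivity)]
      nlinarith [sq_nonneg (g x - s)]
    have heval : (∫ t in u..v, (s ^ 2 + (g t) ^ 2) / (2 * s))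
        = ((v - u) * s ^ 2 + ∫ t in u..v, (g t) ^ 2) / (2 * s) := by
      rw [intervalIntegral.integral_div, intervalIntegral.integral_add intervalIntegrable_const hg2,
        intervalIntegral.integral_const]
      simp [smul_eq_mul]
    rw [heval] at hmono
    refine hmono.trans ?_
    apply div_le_div_of_nonneg_right ?_ (by positivity)
    have : (∫ t in u..v, (g t) ^ 2) ≤ K := by
      rw [intervalIntegral.integral_of_le huv]; exact hK
    linarith
  · rw [intervalIntegral.integral_undef hgi]
    apply div_nonneg (by nlinarith) (by positivity)

lemma key_aux (c : ℝ) (hc : 0 < c) (h g f : ℝ → ℝ) (a b : ℝ) (hab : a < b)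
    (hpos : ∀ x ∈ Set.Ioc a b, 0 < h x)
    (hfund : ∀ x ∈ Set.Ioc a b, h x = ∫ t in a..x, g t)
    (hg : IntegrableOn (fun t => (g t) ^ 2) (Set.Icc a b))
    (hlb : ∀ x ∈ Set.Ioc a b, c / (h x) ^ 2 ≤ f x)
    (hfint : IntegrableOn f (Set.Ioc a b)) : False := by
  set K : ℝ := ∫ t in Set.Icc a b, (g t) ^ 2 with hKdef
  have hK0 : 0 ≤ K := setIntegral_nonneg measurableSet_Icc fun t _ => sq_nonneg _
  -- main pointwise bound
  have hbd : ∀ x ∈ Set.Ioc a b, ∀ s : ℝ, 0 < s →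
      h x ≤ ((x - a) * s ^ 2 + K) / (2 * s) := by
    intro x hx s hs
    have hax : a ≤ x := hx.1.le
    have hKx : (∫ t in Set.Ioc a x, (g t) ^ 2) ≤ K := by
      apply setIntegral_mono_set hg
      · exact Filter.Eventually.of_forall fun t => sq_nonneg _
      · exact Filter.Eventually.of_forall fun t ht => ⟨ht.1.le, ht.2.trans hx.2⟩
    have := bound_aux g a x K s hax hs (hg.mono_set (Set.Icc_subset_Icc le_rfl hx.2)) hKx
    rw [← hfund x hx] at this
    exact this
  -- K is positive
  have hKpos : 0 < K := by
    rcases hK0.lt_or_eq with hK | hK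
    · exact hK
    · exfalso
      have hb0 : 0 < h b := hpos b ⟨hab, le_rfl⟩
      have hba : 0 < b - a := sub_pos.2 hab
      set s : ℝ := h b / (b - a) with hsdef
      have hs : 0 < s := div_pos hb0 hba
      have hbb := hbd b ⟨hab, le_rfl⟩ s hs
      rw [le_div_iff₀ (by positivity)] at hbb
      have hsb : s * (b - a) = h b := by rw [hsdef]; field_simp
      nlinarith
  -- square bound
  have hsq : ∀ x ∈ Set.Ioc a b, (h x) ^ 2 ≤ K * (x - a) := by
    intro x hx
    have hxa : 0 < x - a := sub_pos.2 hx.1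
    set s : ℝ := Real.sqrt (K / (x - a)) with hsdef
    have hs : 0 < s := Real.sqrt_pos.2 (div_pos hKpos hxa)
    have hs2 : s ^ 2 = K / (x - a) := Real.sq_sqrt (le_of_lt (div_pos hKpos hxa))
    have hbx := hbd x hx s hs
    have e1 : (x - a) * s ^ 2 = K := by rw [hs2]; field_simp
    have e2 : ((x - a) * s ^ 2 + K) / (2 * s) = K / s := by
      rw [e1, div_eq_div_iff (by positivity) (ne_of_gt hs)]; ring
    rw [e2] at hbx
    have h3 : (h x) ^ 2 ≤ (K / s) ^ 2 := pow_le_pow_left₀ (hpos x hx).le hbx 2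
    have h4 : (K / s) ^ 2 = K * (x - a) := by
      rw [div_pow, hs2]
      field_simp
    linarith [h3, h4.symm.le]
  -- the divergent lower bound
  set F : ℝ → ℝ := fun x => (c / K) * (x - a)⁻¹ with hFdef
  have hFle : ∀ x ∈ Set.Ioc a b, F x ≤ f x := by
    intro x hx
    have hxa : 0 < x - a := sub_pos.2 hx.1
    have h2 : 0 < (h x) ^ 2 := pow_pos (hpos x hx) 2
    have h5 : c / (K * (x - a)) ≤ c / (h x) ^ 2 :=
      div_le_div_of_nonneg_left hc.le h2 (hsq x hx)
    have h6 : F x = c / (K * (x - a)) := by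
      rw [hFdef]; field_simp
    linarith [hlb x hx, h6.le, h6.ge]
  have hFnn : ∀ x ∈ Set.Ioc a b, 0 ≤ F x := by
    intro x hx
    have hxa : 0 < x - a := sub_pos.2 hx.1
    positivity
  have hFint : IntegrableOn F (Set.Ioc a b) := by
    apply Integrable.mono' hfint
    · exact (((measurable_id.sub_const a).inv).const_mul _).aestronglyMeasurable
    · filter_upwards [ae_restrict_mem measurableSet_Ioc] with x hx
      rw [Real.norm_eq_abs, abs_of_nonneg (hFnn x hx)]
      exact hFle x hx
  have hinv : IntegrableOn (fun x => (x - a)⁻¹) (Set.Ioc a b) := by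
    have h7 := hFint.const_mul (K / c)
    have h8 : (fun x => (K / c) * F x) = fun x => (x - a)⁻¹ := by
      funext x
      rw [hFdef]
      field_simp
    rwa [h8] at h7
  have hII : IntervalIntegrable (fun x => (x - a)⁻¹) volume a b :=
    (intervalIntegrable_iff_integrableOn_Ioc_of_le hab.le).2 hinv
  rw [intervalIntegrable_sub_inv_iff] at hII
  rcases hII with h9 | h9
  · exact hab.ne h9
  · exact h9 Set.left_mem_uIcc

lemma key_aux' (c : ℝ) (hc : 0 < c) (h g f : ℝ → ℝ) (a b : ℝ) (hab : a < b)
    (hpos : ∀ x ∈ Set.Ico a b, 0 < h x)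
    (hfund : ∀ x ∈ Set.Ico a b, h x = ∫ t in x..b, g t)
    (hg : IntegrableOn (fun t => (g t) ^ 2) (Set.Icc a b))
    (hlb : ∀ x ∈ Set.Ico a b, c / (h x) ^ 2 ≤ f x)
    (hfint : IntegrableOn f (Set.Ico a b)) : False := by
  set K : ℝ := ∫ t in Set.Icc a b, (g t) ^ 2 with hKdef
  have hK0 : 0 ≤ K := setIntegral_nonneg measurableSet_Icc fun t _ => sq_nonneg _
  have hbd : ∀ x ∈ Set.Ico a b, ∀ s : ℝ, 0 < s →
      h x ≤ ((b - x) * s ^ 2 + K) / (2 * s) := by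
    intro x hx s hs
    have hxb : x ≤ b := hx.2.le
    have hKx : (∫ t in Set.Ioc x b, (g t) ^ 2) ≤ K := by
      apply setIntegral_mono_set hg
      · exact Filter.Eventually.of_forall fun t => sq_nonneg _
      · exact Filter.Eventually.of_forall fun t ht => ⟨hx.1.trans ht.1.le, ht.2⟩
    have := bound_aux g x b K s hxb hs (hg.mono_set (Set.Icc_subset_Icc hx.1 le_rfl)) hKx
    rw [← hfund x hx] at this
    exact this
  have hKpos : 0 < K := by
    rcases hK0.lt_or_eq with hK | hK
    · exact hK
    · exfalso
      have hb0 : 0 < h a := hpos a ⟨le_rfl, hab⟩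
      have hba : 0 < b - a := sub_pos.2 hab
      set s : ℝ := h a / (b - a) with hsdef
      have hs : 0 < s := div_pos hb0 hba
      have hbb := hbd a ⟨le_rfl, hab⟩ s hs
      rw [le_div_iff₀ (by positivity)] at hbb
      have hsb : s * (b - a) = h a := by rw [hsdef]; field_simp
      nlinarith
  have hsq : ∀ x ∈ Set.Ico a b, (h x) ^ 2 ≤ K * (b - x) := by
    intro x hx
    have hxa : 0 < b - x := sub_pos.2 hx.2
    set s : ℝ := Real.sqrt (K / (b - x)) with hsdef
    have hs : 0 < s := Real.sqrt_pos.2 (div_pos hKpos hxa)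
    have hs2 : s ^ 2 = K / (b - x) := Real.sq_sqrt (le_of_lt (div_pos hKpos hxa))
    have hbx := hbd x hx s hs
    have e1 : (b - x) * s ^ 2 = K := by rw [hs2]; field_simp
    have e2 : ((b - x) * s ^ 2 + K) / (2 * s) = K / s := by
      rw [e1, div_eq_div_iff (by positivity) (ne_of_gt hs)]; ring
    rw [e2] at hbx
    have h3 : (h x) ^ 2 ≤ (K / s) ^ 2 := pow_le_pow_left₀ (hpos x hx).le hbx 2
    have h4 : (K / s) ^ 2 = K * (b - x) := by
      rw [div_pow, hs2]
      field_simp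
    linarith [h3, h4.symm.le]
  set F : ℝ → ℝ := fun x => (c / K) * (b - x)⁻¹ with hFdef
  have hFle : ∀ x ∈ Set.Ico a b, F x ≤ f x := by
    intro x hx
    have hxa : 0 < b - x := sub_pos.2 hx.2
    have h2 : 0 < (h x) ^ 2 := pow_pos (hpos x hx) 2
    have h5 : c / (K * (b - x)) ≤ c / (h x) ^ 2 :=
      div_le_div_of_nonneg_left hc.le h2 (hsq x hx)
    have h6 : F x = c / (K * (b - x)) := by
      rw [hFdef]; field_simp
    linarith [hlb x hx, h6.le, h6.ge]
  have hFnn : ∀ x ∈ Set.Ico a b, 0 ≤ F x := by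
    intro x hx
    have hxa : 0 < b - x := sub_pos.2 hx.2
    positivity
  have hFint : IntegrableOn F (Set.Ico a b) := by
    apply Integrable.mono' hfint
    · exact (((measurable_const.sub measurable_id).inv).const_mul _).aestronglyMeasurable
    · filter_upwards [ae_restrict_mem measurableSet_Ico] with x hx
      rw [Real.norm_eq_abs, abs_of_nonneg (hFnn x hx)]
      exact hFle x hx
  have hinv : IntegrableOn (fun x => (x - b)⁻¹) (Set.Ico a b) := by
    have h7 := (hFint.const_mul (K / c)).neg
    have h8 : (-fun x => ((K / c) * F x)) = fun x => (x - b)⁻¹ := by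
      funext x
      simp only [Pi.neg_apply, hFdef]
      rw [show (x - b)⁻¹ = -(b - x)⁻¹ by rw [show x - b = -(b - x) by ring, inv_neg], neg_inj]
      field_simp
    rwa [h8] at h7
  have hinv2 : IntegrableOn (fun x => (x - b)⁻¹) (Set.Ioc a b) := by
    rw [integrableOn_Ioc_iff_integrableOn_Ioo]
    exact hinv.mono_set Set.Ioo_subset_Ico_self
  have hII : IntervalIntegrable (fun x => (x - b)⁻¹) volume a b :=
    (intervalIntegrable_iff_integrableOn_Ioc_of_le hab.le).2 hinv2
  rw [intervalIntegrable_sub_inv_iff] at hII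
  rcases hII with h9 | h9
  · exact hab.ne h9
  · exact h9 Set.right_mem_uIcc


theorem finite_energy_implies_positive
    (Q : ℝ → ℝ) (hQcont : ContinuousOn Q (Set.Ioi 0))
    (hQbdd : ∃ B : ℝ, ∀ t : ℝ, 0 ≤ t → B ≤ Q t)
    (hQ0 : Q 0 = 0)
    (c ε : ℝ) (hc : 0 < c) (hε : 0 < ε)
    (hQsing : ∀ t ∈ Set.Ioc (0:ℝ) ε, c / t ^ 2 ≤ Q t)
    (h g : ℝ → ℝ)
    (hhcont : Continuous h) (hhnn : ∀ x, 0 ≤ h x) (hhne : ∃ x, h x ≠ 0)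
    (hgloc : ∀ a b : ℝ, IntegrableOn (fun t => (g t) ^ 2) (Set.Icc a b))
    (hfund : ∀ x y : ℝ, x ≤ y → h y - h x = ∫ t in x..y, g t)
    (hE : IntegrableOn (fun x => (1/2) * (g x) ^ 2 + Q (h x)) {x | 0 < h x}) :
    ∀ x : ℝ, 0 < h x := by
  obtain ⟨x₁, hx1ne⟩ := hhne
  have hx1 : 0 < h x₁ := lt_of_le_of_ne (hhnn x₁) (Ne.symm hx1ne)
  intro x₀
  by_contra hx0
  have hx00 : h x₀ = 0 := le_antisymm (not_lt.1 hx0) (hhnn x₀)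
  have hne : x₀ ≠ x₁ := fun e => hx1.ne' (e ▸ hx00)
  set f : ℝ → ℝ := fun x => (1/2) * (g x) ^ 2 + Q (h x) with hfdef
  rcases hne.lt_or_gt with hlt | hlt
  · -- x₀ < x₁ : h vanishes to the left of a positivity point
    set S : Set ℝ := Set.Icc x₀ x₁ ∩ {t | h t = 0} with hSdef
    have hSc : IsClosed S := isClosed_Icc.inter (isClosed_eq hhcont continuous_const)
    have hx0S : x₀ ∈ S := ⟨⟨le_rfl, hlt.le⟩, hx00⟩
    have hSbdd : BddAbove S := ⟨x₁, fun t ht => ht.1.2⟩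
    set a := sSup S with hadef
    have haS : a ∈ S := hSc.csSup_mem ⟨x₀, hx0S⟩ hSbdd
    have ha0 : h a = 0 := haS.2
    have hax0 : x₀ ≤ a := le_csSup hSbdd hx0S
    have hax1 : a < x₁ := lt_of_le_of_ne haS.1.2 (fun e => hx1.ne' (e ▸ ha0))
    have hposI : ∀ t ∈ Set.Ioc a x₁, 0 < h t := by
      intro t ht
      rcases (hhnn t).lt_or_eq with hp | hp
      · exact hp
      · exact absurd (le_csSup hSbdd ⟨⟨hax0.trans ht.1.le, ht.2⟩, hp.symm⟩)
          (not_le.2 ht.1)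
    have hmem : {y | h y < ε} ∈ 𝓝 a :=
      (isOpen_lt hhcont continuous_const).mem_nhds (by simpa [ha0] using hε)
    obtain ⟨δ, hδ, hball⟩ := Metric.mem_nhds_iff.1 hmem
    set b := min (a + δ/2) x₁ with hbdef
    have hab : a < b := lt_min (by linarith) hax1
    have hsub : ∀ t ∈ Set.Ioc a b, t ∈ Set.Ioc a x₁ :=
      fun t ht => ⟨ht.1, ht.2.trans (min_le_right _ _)⟩
    have hsmall : ∀ t ∈ Set.Ioc a b, h t < ε := by
      intro t ht
      apply hball
      rw [Metric.mem_ball, Real.dist_eq,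
        abs_of_nonneg (by linarith [ht.1.le] : (0:ℝ) ≤ t - a)]
      have := ht.2.trans (min_le_left _ _)
      linarith
    apply key_aux c hc h g f a b hab
    · exact fun t ht => hposI t (hsub t ht)
    · intro t ht
      have := hfund a t ht.1.le
      rw [ha0, sub_zero] at this
      exact this
    · exact hgloc a b
    · intro t ht
      have hpt := hposI t (hsub t ht)
      have hQ := hQsing (h t) ⟨hpt, (hsmall t ht).le⟩
      have hg2 : 0 ≤ (1/2) * (g t) ^ 2 := by positivity
      simp only [hfdef]
      linarith
    · exact hE.mono_set fun t ht => hposI t (hsub t ht)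
  · -- x₁ < x₀ : h vanishes to the right of a positivity point
    set S : Set ℝ := Set.Icc x₁ x₀ ∩ {t | h t = 0} with hSdef
    have hSc : IsClosed S := isClosed_Icc.inter (isClosed_eq hhcont continuous_const)
    have hx0S : x₀ ∈ S := ⟨⟨hlt.le, le_rfl⟩, hx00⟩
    have hSbdd : BddBelow S := ⟨x₁, fun t ht => ht.1.1⟩
    set b := sInf S with hbdef
    have hbS : b ∈ S := hSc.csInf_mem ⟨x₀, hx0S⟩ hSbdd
    have hb0 : h b = 0 := hbS.2
    have hbx0 : b ≤ x₀ := csInf_le hSbdd hx0S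
    have hx1b : x₁ < b :=
      lt_of_le_of_ne hbS.1.1 (fun e => hx1.ne' (by rw [e]; exact hb0))
    have hposI : ∀ t ∈ Set.Ico x₁ b, 0 < h t := by
      intro t ht
      rcases (hhnn t).lt_or_eq with hp | hp
      · exact hp
      · exact absurd (csInf_le hSbdd ⟨⟨ht.1, ht.2.le.trans hbx0⟩, hp.symm⟩)
          (not_le.2 ht.2)
    have hmem : {y | h y < ε} ∈ 𝓝 b :=
      (isOpen_lt hhcont continuous_const).mem_nhds (by simpa [hb0] using hε)
    obtain ⟨δ, hδ, hball⟩ := Metric.mem_nhds_iff.1 hmem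
    set a := max (b - δ/2) x₁ with hadef
    have hab : a < b := max_lt (by linarith) hx1b
    have hsub : ∀ t ∈ Set.Ico a b, t ∈ Set.Ico x₁ b :=
      fun t ht => ⟨(le_max_right _ _).trans ht.1, ht.2⟩
    have hsmall : ∀ t ∈ Set.Ico a b, h t < ε := by
      intro t ht
      apply hball
      rw [Metric.mem_ball, Real.dist_eq,
        abs_of_nonpos (by linarith [ht.2.le] : t - b ≤ (0:ℝ))]
      have := (le_max_left (b - δ/2) x₁).trans ht.1
      linarith
    apply key_aux' c hc h (fun t => -g t) f a b hab
    · exact fun t ht => hposI t (hsub t ht)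
    · intro t ht
      have := hfund t b ht.2.le
      rw [hb0, zero_sub] at this
      rw [intervalIntegral.integral_neg]
      linarith
    · simpa only [neg_sq] using hgloc a b
    · intro t ht
      have hpt := hposI t (hsub t ht)
      have hQ := hQsing (h t) ⟨hpt, (hsmall t ht).le⟩
      have hg2 : 0 ≤ (1/2) * (g t) ^ 2 := by positivity
      simp only [hfdef]
      linarith
    · exact hE.mono_set fun t ht => hposI t (hsub t ht)
end

section
/- Let Q : [0,∞) → ℝ be continuous on (0,∞) and bounded below, with Q(0) = 0, and suppose there exist constants c > 0 and ε > 0 such that Q(t) ≥ c·t⁻² for all t ∈ (0, ε]. Let h : ℝ → ℝ be continuous, nonnegative and not identically zero, and let g : ℝ → ℝ be locally square-integrable with h(y) − h(x) = ∫ₓʸ g(t) dt for all x ≤ y. If the energy E[h] = ∫_{{h>0}} (½ g(x)² + Q(h(x))) dx is finite, then h(x) does not tend to 0 as x → +∞, and h(x) does not tend to 0 as x → −∞. -/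
open MeasureTheory Filter Set Topology


lemma cs_aux (g : ℝ → ℝ) (u v : ℝ)
    (hg2 : IntegrableOn (fun t => g t ^ 2) (Set.Ioc u v)) :
    (∫ x in Set.Ioc u v, |g x|) ^ 2
      ≤ (v - u) * ∫ x in Set.Ioc u v, g x ^ 2 := by
  rcases le_or_gt v u with hvu | huv
  · rw [Set.Ioc_eq_empty (by exact not_lt.mpr hvu)]
    simp only [Measure.restrict_empty, integral_zero_measure]
    nlinarith [sq_nonneg (v - u)]
  set μ := volume.restrict (Set.Ioc u v) with hμdef
  haveI : Fact ((volume : Measure ℝ) (Set.Ioc u v) < ⊤) := ⟨measure_Ioc_lt_top⟩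
  have hconj : Real.HolderConjugate 2 2 := ⟨by norm_num, by norm_num, by norm_num⟩
  have hm : AEStronglyMeasurable (fun x => |g x|) μ := by
    have h1 : AEStronglyMeasurable (fun t => g t ^ 2) μ := hg2.aestronglyMeasurable
    have h2 := Real.continuous_sqrt.comp_aestronglyMeasurable h1
    refine h2.congr (Filter.Eventually.of_forall fun x => ?_)
    simp [Real.sqrt_sq_eq_abs]
  have hmem : MemLp (fun x => |g x|) 2 μ := by
    rw [memLp_two_iff_integrable_sq hm]
    simpa [sq_abs] using hg2.integrable
  have hone : MemLp (fun _ : ℝ => (1:ℝ)) 2 μ := memLp_const 1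
  have hH := integral_mul_le_Lp_mul_Lq_of_nonneg hconj
      (Filter.Eventually.of_forall fun x => zero_le_one)
      (Filter.Eventually.of_forall fun x => abs_nonneg (g x))
      (by simpa using hone) (by simpa using hmem)
  simp only [one_mul, Real.one_rpow] at hH
  have h1int : ∫ _ : ℝ, (1:ℝ) ∂μ = v - u := by
    simp [hμdef, Real.volume_Ioc, huv.le]
  rw [h1int] at hH
  have hA : (0:ℝ) ≤ ∫ x in Set.Ioc u v, g x ^ 2 :=
    integral_nonneg fun x => sq_nonneg _
  have habs2 : (∫ a, |g a| ^ (2:ℝ) ∂μ) = ∫ x in Set.Ioc u v, g x ^ 2 := by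
    rw [hμdef]
    refine setIntegral_congr_fun measurableSet_Ioc fun x _ => ?_
    rw [show ((2:ℝ)) = ((2:ℕ):ℝ) by norm_num, Real.rpow_natCast]
    simp [sq_abs]
  rw [habs2] at hH
  rw [← Real.sqrt_eq_rpow, ← Real.sqrt_eq_rpow] at hH
  have := Real.sq_sqrt (sub_nonneg.mpr huv.le)
  have := Real.sq_sqrt hA
  have h0 : (0:ℝ) ≤ ∫ a, |g a| ∂μ := integral_nonneg fun x => abs_nonneg _
  calc (∫ x in Set.Ioc u v, |g x|) ^ 2 = (∫ a, |g a| ∂μ) ^ 2 := by rw [hμdef]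
    _ ≤ (Real.sqrt (v-u) * Real.sqrt (∫ x in Set.Ioc u v, g x ^ 2)) ^ 2 := by
        apply pow_le_pow_left₀ h0 hH
    _ = (v - u) * ∫ x in Set.Ioc u v, g x ^ 2 := by
        rw [mul_pow]; rw [Real.sq_sqrt (sub_nonneg.mpr huv.le), Real.sq_sqrt hA]


lemma interval_lb (Q h g : ℝ → ℝ) (c : ℝ) (hc : 0 < c) {u v a : ℝ} (huv : u < v) (ha : 0 < a)
    (hQlb : ∀ x ∈ Set.Ioc u v, c / a ^ 2 ≤ Q (h x))
    (hΔ : a / 2 ≤ |h v - h u|)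
    (hfund : h v - h u = ∫ t in u..v, g t)
    (hg2 : IntegrableOn (fun t => g t ^ 2) (Set.Ioc u v))
    (hQi : IntegrableOn (fun x => Q (h x)) (Set.Ioc u v)) :
    Real.sqrt (c / 2) ≤ ∫ x in Set.Ioc u v, ((1/2) * g x ^ 2 + Q (h x)) := by
  set L := v - u with hL
  have hLpos : 0 < L := sub_pos.mpr huv
  set A := ∫ x in Set.Ioc u v, g x ^ 2 with hA
  have hAnn : 0 ≤ A := integral_nonneg fun x => sq_nonneg _
  -- lower bound on A
  have habs : |h v - h u| ≤ ∫ x in Set.Ioc u v, |g x| := by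
    rw [hfund, intervalIntegral.integral_of_le huv.le]
    exact (norm_integral_le_integral_norm g).trans_eq (by simp [Real.norm_eq_abs])
  have hCS := cs_aux g u v hg2
  have hA_lb : a ^ 2 / 4 ≤ L * A := by
    have h1 : a / 2 ≤ ∫ x in Set.Ioc u v, |g x| := hΔ.trans habs
    nlinarith [h1, hCS]
  -- lower bound on ∫ Q(h)
  have hQint_lb : c / a ^ 2 * L ≤ ∫ x in Set.Ioc u v, Q (h x) := by
    have := setIntegral_ge_of_const_le_real (μ := volume) measurableSet_Ioc
      (measure_Ioc_lt_top.ne) hQlb hQi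
    rwa [Real.volume_real_Ioc_of_le huv.le] at this
  -- combine
  have hsplit : ∫ x in Set.Ioc u v, ((1/2) * g x ^ 2 + Q (h x))
      = (1/2) * A + ∫ x in Set.Ioc u v, Q (h x) := by
    rw [integral_add (hg2.const_mul _) hQi, integral_const_mul]
  rw [hsplit]
  have hx : a ^ 2 / (8 * L) ≤ (1/2) * A := by
    rw [div_le_iff₀ (by positivity)] at *
    nlinarith [hA_lb]
  have key : Real.sqrt (c / 2) ≤ a ^ 2 / (8 * L) + c / a ^ 2 * L := by
    have h2 : Real.sqrt (c/2) = Real.sqrt ((a ^ 2 / (8 * L) + c / a ^ 2 * L)^2) → False → True := by tauto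
    have hsq : c / 2 ≤ (a ^ 2 / (8 * L) + c / a ^ 2 * L) ^ 2 := by
      have e1 : (a ^ 2 / (8 * L)) * (c / a ^ 2 * L) = c / 8 := by
        field_simp
      nlinarith [sq_nonneg (a ^ 2 / (8 * L) - c / a ^ 2 * L)]
    calc Real.sqrt (c / 2) ≤ Real.sqrt ((a ^ 2 / (8 * L) + c / a ^ 2 * L) ^ 2) :=
          Real.sqrt_le_sqrt hsq
      _ = a ^ 2 / (8 * L) + c / a ^ 2 * L := Real.sqrt_sq (by positivity)
  linarith [hx, hQint_lb, key]

lemma step_lemma (h : ℝ → ℝ) (hhcont : Continuous h)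
    (hdecay : Tendsto h atTop (𝓝 0))
    (a b t : ℝ) (hb : 0 < b) (hba : b < a) (hta : h t = a) :
    ∃ u v, t ≤ u ∧ u < v ∧ h u = a ∧ h v = b ∧
      ∀ x ∈ Set.Icc u v, b ≤ h x ∧ h x ≤ a := by
  have hev : ∀ᶠ x in atTop, h x < b := hdecay.eventually_lt_const hb
  obtain ⟨s, hts, hsb⟩ : ∃ s, t < s ∧ h s < b := by
    obtain ⟨s, hs⟩ := (hev.and (eventually_gt_atTop t)).exists
    exact ⟨s, hs.2, hs.1⟩
  -- v = first time in [t,s] where h = b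
  have hKne : ∃ w ∈ Set.Icc t s, h w = b := by
    have : b ∈ Set.Icc (h s) (h t) := ⟨hsb.le, by rw [hta]; exact hba.le⟩
    obtain ⟨w, hw, hwb⟩ := intermediate_value_Icc' hts.le hhcont.continuousOn this
    exact ⟨w, hw, hwb⟩
  set K : Set ℝ := {x ∈ Set.Icc t s | h x = b} with hKdef
  have hKne' : K.Nonempty := by obtain ⟨w, hw, hwb⟩ := hKne; exact ⟨w, hw, hwb⟩
  have hKclosed : IsClosed K :=
    (isClosed_Icc.inter (isClosed_singleton.preimage hhcont) : IsClosed (Set.Icc t s ∩ h ⁻¹' {b}))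
  have hKbdd : BddBelow K := ⟨t, fun x hx => hx.1.1⟩
  set v := sInf K with hvdef
  have hvK : v ∈ K := hKclosed.csInf_mem hKne' hKbdd
  have hvb : h v = b := hvK.2
  have htv : t ≤ v := hvK.1.1
  -- on [t,v], b ≤ h
  have hbelow : ∀ x ∈ Set.Icc t v, b ≤ h x := by
    intro x hx
    by_contra hlt
    push_neg at hlt
    have : b ∈ Set.Icc (h x) (h t) := ⟨hlt.le, by rw [hta]; exact hba.le⟩
    obtain ⟨y, hy, hyb⟩ := intermediate_value_Icc' hx.1 hhcont.continuousOn this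
    have hyK : y ∈ K := ⟨⟨hy.1, le_trans hy.2 (le_trans hx.2 hvK.1.2)⟩, hyb⟩
    have hvy : v ≤ y := csInf_le hKbdd hyK
    have : x = v := le_antisymm hx.2 (hvy.trans hy.2)
    rw [this, hvb] at hlt; exact lt_irrefl _ hlt
  -- u = last time in [t,v] where h = a
  set K2 : Set ℝ := {x ∈ Set.Icc t v | h x = a} with hK2def
  have hK2ne : K2.Nonempty := ⟨t, ⟨le_refl t, htv⟩, hta⟩
  have hK2closed : IsClosed K2 :=
    (isClosed_Icc.inter (isClosed_singleton.preimage hhcont) : IsClosed (Set.Icc t v ∩ h ⁻¹' {a}))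
  have hK2bdd : BddAbove K2 := ⟨v, fun x hx => hx.1.2⟩
  set u := sSup K2 with hudef
  have huK2 : u ∈ K2 := hK2closed.csSup_mem hK2ne hK2bdd
  have hua : h u = a := huK2.2
  have htu : t ≤ u := huK2.1.1
  have huv : u < v := lt_of_le_of_ne huK2.1.2 (by intro he; rw [he, hvb] at hua; linarith)
  refine ⟨u, v, htu, huv, hua, hvb, fun x hx => ⟨?_, ?_⟩⟩
  · exact hbelow x ⟨htu.trans hx.1, hx.2⟩
  · by_contra hgt
    push_neg at hgt
    have : a ∈ Set.Icc (h v) (h x) := ⟨by rw [hvb]; linarith, hgt.le⟩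
    obtain ⟨y, hy, hya⟩ := intermediate_value_Icc' hx.2 hhcont.continuousOn this
    have hyK2 : y ∈ K2 := ⟨⟨htu.trans (hx.1.trans hy.1), hy.2⟩, hya⟩
    have hyu : y ≤ u := le_csSup hK2bdd hyK2
    have : x = u := le_antisymm (hy.1.trans hyu |>.trans (le_refl u)) hx.1
    rw [this, hua] at hgt; exact lt_irrefl _ hgt



lemma no_decay_atTop
    (Q : ℝ → ℝ)
    (c ε : ℝ) (hc : 0 < c) (hε : 0 < ε)
    (hQsing : ∀ t ∈ Set.Ioc (0:ℝ) ε, c / t ^ 2 ≤ Q t)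
    (h g : ℝ → ℝ)
    (hhcont : Continuous h) (hhnn : ∀ x, 0 ≤ h x) (hhne : ∃ x, h x ≠ 0)
    (hgloc : ∀ a b : ℝ, IntegrableOn (fun t => (g t) ^ 2) (Set.Icc a b))
    (hfund : ∀ x y : ℝ, x ≤ y → h y - h x = ∫ t in x..y, g t)
    (hE : IntegrableOn (fun x => (1/2) * (g x) ^ 2 + Q (h x)) {x | 0 < h x})
    (hdecay : Tendsto h atTop (𝓝 0)) : False := by
  classical
  obtain ⟨x₀, hx₀⟩ := hhne
  have hx₀pos : 0 < h x₀ := lt_of_le_of_ne (hhnn x₀) (Ne.symm hx₀)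
  set δ := min ε (h x₀) with hδdef
  have hδpos : 0 < δ := lt_min hε hx₀pos
  have hδε : δ ≤ ε := min_le_left _ _
  -- find t₀ with h t₀ = δ
  obtain ⟨t₀, ht₀⟩ : ∃ t₀, h t₀ = δ := by
    obtain ⟨s, hs⟩ := ((hdecay.eventually_lt_const hδpos).and (eventually_gt_atTop x₀)).exists
    have : δ ∈ Set.Icc (h s) (h x₀) := ⟨hs.1.le, min_le_right _ _⟩
    obtain ⟨w, _, hw⟩ := intermediate_value_Icc' hs.2.le hhcont.continuousOn this
    exact ⟨w, hw⟩
  -- dyadic levels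
  have hpow : ∀ n : ℕ, (0:ℝ) < δ / 2 ^ n := fun n => by positivity
  have hpowlt : ∀ n : ℕ, δ / 2 ^ (n+1) < δ / 2 ^ n := fun n => by
    apply div_lt_div_of_pos_left hδpos (by positivity)
    exact pow_lt_pow_right₀ one_lt_two (Nat.lt_succ_self n)
  -- step function without proof dependence
  have step : ∀ (n : ℕ) (t : ℝ), ∃ u v : ℝ, h t = δ / 2 ^ n →
      (t ≤ u ∧ u < v ∧ h u = δ / 2 ^ n ∧ h v = δ / 2 ^ (n+1) ∧
        ∀ x ∈ Set.Icc u v, δ / 2 ^ (n+1) ≤ h x ∧ h x ≤ δ / 2 ^ n) := by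
    intro n t
    by_cases ht : h t = δ / 2 ^ n
    · obtain ⟨u, v, h1, h2, h3, h4, h5⟩ :=
        step_lemma h hhcont hdecay (δ / 2 ^ n) (δ / 2 ^ (n+1)) t (hpow (n+1)) (hpowlt n) ht
      exact ⟨u, v, fun _ => ⟨h1, h2, h3, h4, h5⟩⟩
    · exact ⟨0, 0, fun hh => absurd hh ht⟩
  choose U V hUV using step
  -- sequence of starting points
  set T : ℕ → ℝ := fun n => Nat.rec t₀ (fun k tk => V k tk) n with hTdef
  have hT0 : T 0 = t₀ := rfl
  have hTsucc : ∀ n, T (n+1) = V n (T n) := fun n => rfl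
  have hThyp : ∀ n, h (T n) = δ / 2 ^ n := by
    intro n
    induction n with
    | zero => simpa [hT0] using ht₀
    | succ k ih =>
      rw [hTsucc k]
      exact ((hUV k (T k)) ih).2.2.2.1
  set u : ℕ → ℝ := fun n => U n (T n) with hudef
  set v : ℕ → ℝ := fun n => V n (T n) with hvdef
  have hprops : ∀ n, T n ≤ u n ∧ u n < v n ∧ h (u n) = δ / 2 ^ n ∧
      h (v n) = δ / 2 ^ (n+1) ∧
      ∀ x ∈ Set.Icc (u n) (v n), δ / 2 ^ (n+1) ≤ h x ∧ h x ≤ δ / 2 ^ n :=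
    fun n => hUV n (T n) (hThyp n)
  have hvT : ∀ n, v n = T (n+1) := fun n => (hTsucc n).symm
  -- ordering
  have hord : ∀ m n : ℕ, m < n → v m ≤ u n := by
    intro m n hmn
    induction n with
    | zero => omega
    | succ k ih =>
      rcases Nat.lt_succ_iff_lt_or_eq.mp hmn with hlt | heq
      · exact (ih hlt).trans ((hprops k).2.1.le.trans ((hvT k) ▸ (hprops (k+1)).1))
      · rw [heq, hvT k]; exact (hprops (k+1)).1
  -- each interval inside {0 < h}
  have hsub : ∀ n, Set.Ioc (u n) (v n) ⊆ {x | 0 < h x} := by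
    intro n x hx
    have := ((hprops n).2.2.2.2 x ⟨hx.1.le, hx.2⟩).1
    exact lt_of_lt_of_le (hpow (n+1)) this
  -- integrability pieces
  have hfint : ∀ n, IntegrableOn (fun x => (1/2) * (g x) ^ 2 + Q (h x)) (Set.Ioc (u n) (v n)) :=
    fun n => hE.mono_set (hsub n)
  have hg2int : ∀ n, IntegrableOn (fun t => g t ^ 2) (Set.Ioc (u n) (v n)) :=
    fun n => (hgloc (u n) (v n)).mono_set Set.Ioc_subset_Icc_self
  have hQint : ∀ n, IntegrableOn (fun x => Q (h x)) (Set.Ioc (u n) (v n)) := by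
    intro n
    have h2 := (hfint n).sub ((hg2int n).const_mul (1/2 : ℝ))
    exact h2.congr (Filter.Eventually.of_forall fun x => by simp only [Pi.sub_apply]; ring)
  -- lower bound for each interval
  have hlow : ∀ n, Real.sqrt (c / 2) ≤
      ∫ x in Set.Ioc (u n) (v n), ((1/2) * g x ^ 2 + Q (h x)) := by
    intro n
    obtain ⟨_, huvn, hun, hvn, hbnd⟩ := hprops n
    refine interval_lb Q h g c hc huvn (hpow n) ?_ ?_ (hfund _ _ huvn.le) (hg2int n) (hQint n)
    · intro x hx
      obtain ⟨hx1, hx2⟩ := hbnd x ⟨hx.1.le, hx.2⟩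
      have hxpos : 0 < h x := lt_of_lt_of_le (hpow (n+1)) hx1
      have hxε : h x ≤ ε := le_trans hx2 (le_trans (by
          apply div_le_self hδpos.le
          exact one_le_pow₀ one_le_two) hδε)
      calc c / (δ / 2 ^ n) ^ 2 ≤ c / (h x) ^ 2 := by
            apply div_le_div_of_nonneg_left hc.le (by positivity)
            exact pow_le_pow_left₀ hxpos.le hx2 2
        _ ≤ Q (h x) := hQsing (h x) ⟨hxpos, hxε⟩
    · rw [hvn, hun]
      rw [abs_of_nonpos (by linarith [hpowlt n])]
      have : δ / 2 ^ (n+1) = (δ / 2 ^ n) / 2 := by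
        rw [pow_succ]; ring
      rw [this]; linarith
  -- sum over N intervals
  set f : ℝ → ℝ := fun x => (1/2) * (g x) ^ 2 + Q (h x) with hfdef
  have hMdef : Integrable (fun x => |f x|) (volume.restrict {x | 0 < h x}) := hE.abs
  set M := ∫ x in {x | 0 < h x}, |f x| with hM
  have hMnn : 0 ≤ M := integral_nonneg fun x => abs_nonneg _
  have hboundN : ∀ N : ℕ, (N : ℝ) * Real.sqrt (c / 2) ≤ M := by
    intro N
    set s : Set ℝ := ⋃ n ∈ Finset.range N, Set.Ioc (u n) (v n) with hs
    have hdisj : (↑(Finset.range N) : Set ℕ).Pairwise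
        (Function.onFun Disjoint (fun n => Set.Ioc (u n) (v n))) := by
      intro m _ n _ hmn
      rcases lt_or_gt_of_ne hmn with hlt | hlt
      · exact Set.Ioc_disjoint_Ioc.mpr (le_max_of_le_right ((min_le_left _ _).trans (hord m n hlt)))
      · exact Set.Ioc_disjoint_Ioc.mpr (le_max_of_le_left ((min_le_right _ _).trans (hord n m hlt)))
    have hsum : ∫ x in s, f x = ∑ n ∈ Finset.range N, ∫ x in Set.Ioc (u n) (v n), f x :=
      integral_biUnion_finset (Finset.range N) (fun i _ => measurableSet_Ioc)
        hdisj (fun i _ => hfint i)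
    have hsubs : s ⊆ {x | 0 < h x} := by
      intro x hx
      simp only [hs, Set.mem_iUnion] at hx
      obtain ⟨n, _, hn⟩ := hx
      exact hsub n hn
    have hsmeas : MeasurableSet s := (Finset.range N).measurableSet_biUnion
      (fun i _ => measurableSet_Ioc)
    have habsE : IntegrableOn (fun x => |f x|) {x | 0 < h x} volume := hE.abs
    have h1 : ∫ x in s, f x ≤ ∫ x in s, |f x| :=
      integral_mono (hE.mono_set hsubs) (habsE.mono_set hsubs) (fun x => le_abs_self _)
    have h2 : ∫ x in s, |f x| ≤ M :=
      setIntegral_mono_set habsE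
        (Filter.Eventually.of_forall fun x => abs_nonneg _)
        (HasSubset.Subset.eventuallyLE hsubs)
    have h3 : (N : ℝ) * Real.sqrt (c / 2) ≤ ∑ n ∈ Finset.range N, ∫ x in Set.Ioc (u n) (v n), f x := by
      have := Finset.card_nsmul_le_sum (Finset.range N)
        (fun n => ∫ x in Set.Ioc (u n) (v n), f x) (Real.sqrt (c / 2)) (fun n _ => hlow n)
      simpa [nsmul_eq_mul] using this
    linarith [hsum ▸ h3]
  obtain ⟨N, hN⟩ := exists_nat_gt (M / Real.sqrt (c / 2))
  have hsq : 0 < Real.sqrt (c / 2) := Real.sqrt_pos.mpr (by linarith)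
  have := hboundN N
  rw [← le_div_iff₀ hsq] at this
  linarith


theorem finite_energy_implies_no_decay_at_infinity
    (Q : ℝ → ℝ) (hQcont : ContinuousOn Q (Set.Ioi 0))
    (hQbdd : ∃ B : ℝ, ∀ t : ℝ, 0 ≤ t → B ≤ Q t)
    (hQ0 : Q 0 = 0)
    (c ε : ℝ) (hc : 0 < c) (hε : 0 < ε)
    (hQsing : ∀ t ∈ Set.Ioc (0:ℝ) ε, c / t ^ 2 ≤ Q t)
    (h g : ℝ → ℝ)
    (hhcont : Continuous h) (hhnn : ∀ x, 0 ≤ h x) (hhne : ∃ x, h x ≠ 0)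
    (hgloc : ∀ a b : ℝ, IntegrableOn (fun t => (g t) ^ 2) (Set.Icc a b))
    (hfund : ∀ x y : ℝ, x ≤ y → h y - h x = ∫ t in x..y, g t)
    (hE : IntegrableOn (fun x => (1/2) * (g x) ^ 2 + Q (h x)) {x | 0 < h x}) :
    ¬ Tendsto h atTop (𝓝 0) ∧ ¬ Tendsto h atBot (𝓝 0) := by
  constructor
  · intro hdecay
    exact no_decay_atTop Q c ε hc hε hQsing h g hhcont hhnn hhne hgloc hfund hE hdecay
  · intro hdecay
    set h' : ℝ → ℝ := fun x => h (-x) with hh'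
    set g' : ℝ → ℝ := fun x => -g (-x) with hg'
    have hemb : MeasurableEmbedding (Neg.neg : ℝ → ℝ) :=
      (Homeomorph.neg ℝ).measurableEmbedding
    have hmp : MeasurePreserving (Neg.neg : ℝ → ℝ) volume volume :=
      Measure.measurePreserving_neg volume
    obtain ⟨x₁, hx₁⟩ := hhne
    refine no_decay_atTop Q c ε hc hε hQsing h' g'
      (hhcont.comp continuous_neg) (fun x => hhnn (-x)) ⟨-x₁, by simpa [hh']⟩
      ?_ ?_ ?_ (hdecay.comp tendsto_neg_atTop_atBot)
    · intro a b
      have hset : Set.Icc a b = (Neg.neg : ℝ → ℝ) ⁻¹' (Set.Icc (-b) (-a)) := by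
        ext x; simp only [Set.mem_preimage, Set.mem_Icc]; constructor <;> intro ⟨h1, h2⟩ <;>
          constructor <;> linarith
      have : IntegrableOn ((fun t => g t ^ 2) ∘ (Neg.neg : ℝ → ℝ))
          ((Neg.neg : ℝ → ℝ) ⁻¹' (Set.Icc (-b) (-a))) volume :=
        (hmp.integrableOn_comp_preimage hemb).mpr (hgloc (-b) (-a))
      rw [hset]
      refine this.congr_fun (fun x _ => ?_) (measurableSet_Icc.preimage measurable_neg)
      simp [hg', Function.comp]
    · intro x y hxy
      have h1 := hfund (-y) (-x) (by linarith)
      have h2 : (∫ t in x..y, g' t) = -∫ t in x..y, g (-t) := by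
        simp [hg', intervalIntegral.integral_neg]
      rw [h2, intervalIntegral.integral_comp_neg]
      simp only [hh']
      linarith [h1, (rfl : (∫ t in -y..(-x), g t) = ∫ t in -y..(-x), g t)]
    · have hset : {x | 0 < h' x} = (Neg.neg : ℝ → ℝ) ⁻¹' {x | 0 < h x} := rfl
      rw [hset]
      have : IntegrableOn ((fun x => (1/2) * (g x) ^ 2 + Q (h x)) ∘ (Neg.neg : ℝ → ℝ))
          ((Neg.neg : ℝ → ℝ) ⁻¹' {x | 0 < h x}) volume :=
        (hmp.integrableOn_comp_preimage hemb).mpr hE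
      refine this.congr_fun (fun x _ => ?_) ?_
      · simp [hg', hh', Function.comp]
      · exact (measurableSet_lt measurable_const (hhcont.measurable)).preimage measurable_neg
end

section
/- Let Q : [0,∞) → ℝ be continuous on (0,∞) and bounded below, with Q(0) = 0, and suppose there exist constants c > 0 and ε > 0 such that Q(t) ≥ c·t⁻² for all t ∈ (0, ε]. Let h : ℝ → ℝ be continuous, nonnegative and not identically zero, square-integrable on ℝ, and let g : ℝ → ℝ be square-integrable on ℝ with h(y) − h(x) = ∫ₓʸ g(t) dt for all x ≤ y (i.e. h ∈ H¹(ℝ)). Then the energy E[h] = ∫_{{h>0}} (½ g(x)² + Q(h(x))) dx is infinite. In particular, mass-constrained minimizers of E in H¹(ℝ) do not exist when Q(t) ≳ t⁻² as t → 0⁺. -/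
open MeasureTheory Filter Set Topology

theorem energy_infinite_on_H1
    (Q : ℝ → ℝ) (hQcont : ContinuousOn Q (Set.Ioi 0))
    (hQbdd : ∃ B : ℝ, ∀ t : ℝ, 0 ≤ t → B ≤ Q t)
    (hQ0 : Q 0 = 0)
    (c ε : ℝ) (hc : 0 < c) (hε : 0 < ε)
    (hQsing : ∀ t ∈ Set.Ioc (0:ℝ) ε, c / t ^ 2 ≤ Q t)
    (h g : ℝ → ℝ)
    (hhcont : Continuous h) (hhnn : ∀ x, 0 ≤ h x) (hhne : ∃ x, h x ≠ 0)
    (hhL2 : Integrable (fun x => (h x) ^ 2))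
    (hgL2 : Integrable (fun x => (g x) ^ 2))
    (hfund : ∀ x y : ℝ, x ≤ y → h y - h x = ∫ t in x..y, g t) :
    ¬ IntegrableOn (fun x => (1/2) * (g x) ^ 2 + Q (h x)) {x | 0 < h x} := by
  intro H
  set f : ℝ → ℝ := fun x => (1/2) * (g x) ^ 2 + Q (h x) with hf
  set S : Set ℝ := {x | 0 < h x} with hSdef
  have hSmeas : MeasurableSet S := (isOpen_lt continuous_const hhcont).measurableSet
  -- The set where h is small but positive
  set Sε : Set ℝ := {x | 0 < h x ∧ h x ≤ ε} with hSε
  have hSεmeas : MeasurableSet Sε := by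
    have : Sε = S ∩ {x | h x ≤ ε} := by ext x; simp [hSε, hSdef, and_comm]
    rw [this]
    exact hSmeas.inter (measurableSet_le hhcont.measurable measurable_const)
  have hSεsub : Sε ⊆ S := fun x hx => hx.1
  -- f ≥ c/ε² on Sε
  have hflb : ∀ x ∈ Sε, c / ε ^ 2 ≤ f x := by
    rintro x ⟨hx1, hx2⟩
    have h1 : c / (h x) ^ 2 ≤ Q (h x) := hQsing _ ⟨hx1, hx2⟩
    have h2 : c / ε ^ 2 ≤ c / (h x) ^ 2 := by
      apply div_le_div_of_nonneg_left hc.le (pow_pos hx1 2)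
      nlinarith
    have h3 : 0 ≤ (1/2) * (g x) ^ 2 := by positivity
    simp only [hf]; linarith
  -- Sε has finite measure
  have hμSε : volume Sε < ⊤ := by
    set F : ℝ → ℝ := Sε.indicator f with hF
    have hFint : Integrable F := (H.mono_set hSεsub).integrable_indicator hSεmeas
    have hsub : Sε ⊆ {x | c / ε ^ 2 ≤ F x} := by
      intro x hx
      simpa [hF, Set.indicator_of_mem hx] using hflb x hx
    exact lt_of_le_of_lt (measure_mono hsub)
      (hFint.measure_ge_lt_top (by positivity))
  -- {h > ε} has finite measure
  have hμA : volume {x | ε < h x} < ⊤ := by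
    refine lt_of_le_of_lt (measure_mono ?_) (hhL2.measure_ge_lt_top (show (0:ℝ) < ε ^ 2 by positivity))
    intro x hx
    have : ε < h x := hx
    simp only [Set.mem_setOf_eq]
    nlinarith
  -- S has finite measure
  have hμS : volume S < ⊤ := by
    have hsub : S ⊆ Sε ∪ {x | ε < h x} := by
      intro x hx
      rcases le_or_gt (h x) ε with h1 | h1
      · exact Or.inl ⟨hx, h1⟩
      · exact Or.inr h1
    calc volume S ≤ volume (Sε ∪ {x | ε < h x}) := measure_mono hsub
      _ ≤ volume Sε + volume {x | ε < h x} := measure_union_le _ _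
      _ < ⊤ := ENNReal.add_lt_top.2 ⟨hμSε, hμA⟩
  -- a point where h is positive
  obtain ⟨x₀, hx₀⟩ := hhne
  have hx₀pos : 0 < h x₀ := lt_of_le_of_ne (hhnn x₀) (Ne.symm hx₀)
  -- there is a zero of h to the right of x₀
  set Z : Set ℝ := {x | x₀ ≤ x ∧ h x = 0} with hZ
  have hZne : Z.Nonempty := by
    by_contra hne
    have hsub : Ici x₀ ⊆ S := by
      intro x hx
      rcases eq_or_lt_of_le (hhnn x) with h1 | h1
      · exact absurd ⟨hx, h1.symm⟩ (fun hmem => hne ⟨x, hmem⟩)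
      · exact h1
    have := lt_of_le_of_lt (measure_mono hsub) hμS
    simp [Real.volume_Ici] at this
  have hZclosed : IsClosed Z := by
    have : Z = Ici x₀ ∩ h ⁻¹' {0} := by ext x; simp [hZ]
    rw [this]
    exact isClosed_Ici.inter (isClosed_singleton.preimage hhcont)
  have hZbdd : BddBelow Z := ⟨x₀, fun x hx => hx.1⟩
  set β : ℝ := sInf Z with hβ
  have hβZ : β ∈ Z := hZclosed.csInf_mem hZne hZbdd
  have hβ0 : h β = 0 := hβZ.2
  have hx₀β : x₀ < β := by
    rcases eq_or_lt_of_le hβZ.1 with h1 | h1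
    · exact absurd (h1 ▸ hβ0) hx₀
    · exact h1
  have hpos : ∀ x ∈ Ico x₀ β, 0 < h x := by
    rintro x ⟨hx1, hx2⟩
    rcases eq_or_lt_of_le (hhnn x) with h1 | h1
    · exact absurd (csInf_le hZbdd ⟨hx1, h1.symm⟩) (not_le.2 hx2)
    · exact h1
  set K2 : ℝ := ∫ x, (g x) ^ 2 with hK2
  have hK2nn : 0 ≤ K2 := integral_nonneg fun x => sq_nonneg _
  -- the key bound (h x)² ≤ K2 * (β - x)
  have hbound : ∀ x ∈ Ico x₀ β, (h x) ^ 2 ≤ K2 * (β - x) := by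
    rintro x ⟨hx1, hx2⟩
    have hu : 0 < β - x := sub_pos.2 hx2
    have hhx : 0 < h x := hpos x ⟨hx1, hx2⟩
    have hint := hfund x β hx2.le
    rw [hβ0] at hint
    by_cases hgi : IntervalIntegrable g volume x β
    · have hIoc : IntegrableOn g (Ioc x β) :=
        (intervalIntegrable_iff_integrableOn_Ioc_of_le hx2.le).1 hgi
      have hμIoc : volume (Ioc x β) < ⊤ := by simp [Real.volume_Ioc]
      have key : ∀ a : ℝ, 0 < a → h x ≤ (a * K2 + a⁻¹ * (β - x)) / 2 := by
        intro a ha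
        have h1 : h x ≤ ∫ t in x..β, |g t| := by
          have habs := intervalIntegral.abs_integral_le_integral_abs (μ := volume) (f := g) hx2.le
          have hxeq : h x = -(∫ t in x..β, g t) := by linarith
          calc h x = -(∫ t in x..β, g t) := hxeq
            _ ≤ |∫ t in x..β, g t| := neg_le_abs _
            _ ≤ ∫ t in x..β, |g t| := habs
        have h2 : (∫ t in x..β, |g t|) = ∫ t in Ioc x β, |g t| :=
          intervalIntegral.integral_of_le hx2.le
        have hRHSint : IntegrableOn (fun t => (a * (g t) ^ 2 + a⁻¹) / 2) (Ioc x β) := by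
          exact (((hgL2.integrableOn).const_mul a).add
            (integrableOn_const hμIoc.ne)).div_const 2
        have h3 : (∫ t in Ioc x β, |g t|) ≤ ∫ t in Ioc x β, (a * (g t) ^ 2 + a⁻¹) / 2 := by
          apply setIntegral_mono_on hIoc.abs hRHSint measurableSet_Ioc
          intro t _
          have h2a : (0:ℝ) < 2 * a := by linarith
          have hkey : 2 * a * |g t| ≤ a ^ 2 * (g t) ^ 2 + 1 := by
            nlinarith [sq_nonneg (a * |g t| - 1), sq_abs (g t)]
          calc |g t| = (2 * a * |g t|) / (2 * a) := by field_simp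
            _ ≤ (a ^ 2 * (g t) ^ 2 + 1) / (2 * a) := by gcongr
            _ = (a * (g t) ^ 2 + a⁻¹) / 2 := by field_simp
        have h4 : (∫ t in Ioc x β, (a * (g t) ^ 2 + a⁻¹) / 2)
            = (a * (∫ t in Ioc x β, (g t) ^ 2) + a⁻¹ * (β - x)) / 2 := by
          rw [integral_div, integral_add ((hgL2.integrableOn).const_mul a)
            (integrableOn_const hμIoc.ne), integral_const_mul, setIntegral_const]
          simp [Real.volume_Ioc, ENNReal.toReal_ofReal hu.le, smul_eq_mul, mul_comm, hx2.le]
        have h5 : (∫ t in Ioc x β, (g t) ^ 2) ≤ K2 :=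
          setIntegral_le_integral hgL2 (Eventually.of_forall fun t => sq_nonneg _)
        have h6 : a * (∫ t in Ioc x β, (g t) ^ 2) ≤ a * K2 :=
          mul_le_mul_of_nonneg_left h5 ha.le
        calc h x ≤ ∫ t in Ioc x β, |g t| := h2 ▸ h1
          _ ≤ (a * (∫ t in Ioc x β, (g t) ^ 2) + a⁻¹ * (β - x)) / 2 := h4 ▸ h3
          _ ≤ (a * K2 + a⁻¹ * (β - x)) / 2 := by linarith
      rcases eq_or_lt_of_le hK2nn with hK20 | hK2pos
      · exfalso
        have hthis := key ((β - x) / h x) (div_pos hu hhx)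
        rw [← hK20, inv_div] at hthis
        rw [div_mul_cancel₀ _ hu.ne'] at hthis
        linarith
      · have hsq1 : 0 < Real.sqrt (β - x) := Real.sqrt_pos.2 hu
        have hsq2 : 0 < Real.sqrt K2 := Real.sqrt_pos.2 hK2pos
        have hthis := key (Real.sqrt (β - x) / Real.sqrt K2) (div_pos hsq1 hsq2)
        have e1 : Real.sqrt (β - x) / Real.sqrt K2 * K2
            = Real.sqrt (β - x) * Real.sqrt K2 := by
          rw [div_mul_eq_mul_div, mul_div_assoc, Real.div_sqrt]
        have e2 : (Real.sqrt (β - x) / Real.sqrt K2)⁻¹ * (β - x)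
            = Real.sqrt K2 * Real.sqrt (β - x) := by
          rw [inv_div, div_mul_eq_mul_div, mul_div_assoc, Real.div_sqrt]
        rw [e1, e2] at hthis
        have hthis' : h x ≤ Real.sqrt (β - x) * Real.sqrt K2 := by linarith
        have hsqr := mul_le_mul hthis' hthis' hhx.le (by positivity)
        have e3 : Real.sqrt (β - x) * Real.sqrt K2 * (Real.sqrt (β - x) * Real.sqrt K2)
            = (β - x) * K2 := by
          rw [mul_mul_mul_comm, Real.mul_self_sqrt hu.le, Real.mul_self_sqrt hK2nn]
        rw [e3] at hsqr
        nlinarith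
    · exfalso
      rw [intervalIntegral.integral_undef hgi] at hint
      have : h x = 0 := by linarith
      exact absurd this hhx.ne'
  -- K2 is positive
  have hK2pos : 0 < K2 := by
    have := hbound x₀ ⟨le_refl _, hx₀β⟩
    nlinarith [sub_pos.2 hx₀β]
  set δ : ℝ := min (β - x₀) (ε ^ 2 / K2) with hδ
  have hδpos : 0 < δ := lt_min (sub_pos.2 hx₀β) (by positivity)
  set J : Set ℝ := Ioo (β - δ) β with hJ
  have hJsub : J ⊆ Ico x₀ β := by
    rintro x ⟨hx1, hx2⟩
    have : β - δ ≥ x₀ := by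
      have := min_le_left (β - x₀) (ε ^ 2 / K2)
      simp only [hδ] at hx1 ⊢
      linarith
    exact ⟨le_of_lt (lt_of_le_of_lt this hx1), hx2⟩
  have hJS : J ⊆ S := fun x hx => hpos x (hJsub hx)
  set φ : ℝ → ℝ := fun x => c / (K2 * (β - x)) with hφ
  have hφf : ∀ x ∈ J, φ x ≤ f x ∧ 0 ≤ φ x := by
    intro x hx
    have hhx : 0 < h x := hpos x (hJsub hx)
    have hb := hbound x (hJsub hx)
    have hux : 0 < β - x := sub_pos.2 hx.2
    have hδx : β - x < δ := by
      rcases hx with ⟨hx1, hx2⟩; linarith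
    have hbε : (h x) ^ 2 ≤ ε ^ 2 := by
      have h1 : K2 * (β - x) ≤ K2 * δ := mul_le_mul_of_nonneg_left hδx.le hK2nn
      have h2 : K2 * δ ≤ K2 * (ε ^ 2 / K2) :=
        mul_le_mul_of_nonneg_left (min_le_right _ _) hK2nn
      have h3 : K2 * (ε ^ 2 / K2) = ε ^ 2 := by field_simp
      linarith
    have hhxε : h x ≤ ε := by nlinarith
    have hQs := hQsing (h x) ⟨hhx, hhxε⟩
    have h2 : c / (K2 * (β - x)) ≤ c / (h x) ^ 2 :=
      div_le_div_of_nonneg_left hc.le (pow_pos hhx 2) hb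
    have h3 : 0 ≤ (1/2) * (g x) ^ 2 := by positivity
    constructor
    · simp only [hφ, hf]; linarith
    · positivity
  have hfJ : IntegrableOn f J := H.mono_set hJS
  have hφmeas : Measurable φ := by
    exact measurable_const.div ((measurable_const.sub measurable_id).const_mul K2)
  have hφint : IntegrableOn φ J := by
    apply hfJ.mono' hφmeas.aestronglyMeasurable
    filter_upwards [ae_restrict_mem measurableSet_Ioo] with x hx
    rcases hφf x hx with ⟨h1, h2⟩
    rw [Real.norm_eq_abs, abs_of_nonneg h2]
    exact h1
  -- transfer to non-integrability of (x - β)⁻¹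
  have hinveq : (fun x : ℝ => (x - β)⁻¹) = fun x => (-(K2 / c)) * φ x := by
    funext x
    rcases eq_or_ne x β with rfl | hne
    · simp [hφ]
    · have hsub : β - x ≠ 0 := sub_ne_zero.2 (Ne.symm hne)
      have hne' : x - β ≠ 0 := sub_ne_zero.2 hne
      simp only [hφ]
      field_simp
      ring
  have hinv : IntegrableOn (fun x : ℝ => (x - β)⁻¹) J := by
    rw [hinveq]
    exact hφint.const_mul _
  have hII : IntervalIntegrable (fun x : ℝ => (x - β)⁻¹) volume (β - δ) β :=
    (intervalIntegrable_iff_integrableOn_Ioo_of_le (by linarith)).2 hinv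
  rw [intervalIntegrable_sub_inv_iff] at hII
  rcases hII with h1 | h1
  · linarith
  · exact h1 (Set.right_mem_uIcc)
end

section
/- Let m > 1 and A > 0, and let P : (0,∞) → (0,∞) be continuous with t^{m−1}·P(t) → A/(m−1) as t → 0⁺. Let δ > 0 and let H : [0,δ) → [0,∞) be continuous with H(0) = 0, H > 0 and differentiable on (0,δ) with H' > 0 on (0,δ), and suppose H'(y)² / (2·P(H(y))) → 1 as y → 0⁺. Then H(y) / y^{2/(m+1)} → (A(m+1)²/(2(m−1)))^{1/(m+1)} as y → 0⁺. -/
open MeasureTheory Filter Set Topology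

theorem contact_line_asymptotics_from_leading_balance
    (m A δ : ℝ) (hm : 1 < m) (hA : 0 < A) (hδ : 0 < δ)
    (P : ℝ → ℝ) (hPcont : ContinuousOn P (Set.Ioi 0))
    (hPpos : ∀ t > (0:ℝ), 0 < P t)
    (hPas : Tendsto (fun t => t ^ (m-1) * P t) (𝓝[>] 0) (𝓝 (A/(m-1))))
    (H H' : ℝ → ℝ) (hHcont : ContinuousOn H (Set.Ico 0 δ)) (hH0 : H 0 = 0)
    (hHpos : ∀ y ∈ Set.Ioo (0:ℝ) δ, 0 < H y)
    (hderiv : ∀ y ∈ Set.Ioo (0:ℝ) δ, HasDerivAt H (H' y) y)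
    (hderivpos : ∀ y ∈ Set.Ioo (0:ℝ) δ, 0 < H' y)
    (hbal : Tendsto (fun y => (H' y) ^ 2 / (2 * P (H y))) (𝓝[>] 0) (𝓝 1)) :
    Tendsto (fun y => H y / y ^ (2/(m+1))) (𝓝[>] 0)
      (𝓝 ((A * (m+1)^2 / (2*(m-1))) ^ (1/(m+1)))) := by
  have hm1 : (0:ℝ) < m - 1 := by linarith
  have hm1' : (0:ℝ) < m + 1 := by linarith
  have hAm : (0:ℝ) < A / (m - 1) := div_pos hA hm1
  set s : ℝ := Real.sqrt (2 * (A / (m - 1))) with hs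
  have hspos : 0 < s := Real.sqrt_pos.mpr (by positivity)
  set c : ℝ := (m + 1) / 2 * s with hc
  have hcpos : 0 < c := by positivity
  have hIooMem : Ioo (0:ℝ) δ ∈ 𝓝[>] (0:ℝ) := Ioo_mem_nhdsGT_of_mem ⟨le_refl 0, hδ⟩
  -- H tends to 0 from the right
  have hHto0 : Tendsto H (𝓝[>] (0:ℝ)) (𝓝 0) := by
    have h1 : ContinuousWithinAt H (Ioo 0 δ) 0 :=
      (hHcont 0 ⟨le_refl 0, hδ⟩).mono Ioo_subset_Ico_self
    have := h1.tendsto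
    rw [hH0] at this
    rwa [nhdsWithin_Ioo_eq_nhdsGT hδ] at this
  have hHto0' : Tendsto H (𝓝[>] (0:ℝ)) (𝓝[>] 0) := by
    apply tendsto_nhdsWithin_of_tendsto_nhds_of_eventually_within _ hHto0
    filter_upwards [hIooMem] with y hy using hHpos y hy
  -- composed asymptotics
  have hPH : Tendsto (fun y => (H y) ^ (m-1) * P (H y)) (𝓝[>] (0:ℝ)) (𝓝 (A/(m-1))) :=
    hPas.comp hHto0'
  have h2 : Tendsto (fun y => Real.sqrt (2 * ((H y) ^ (m-1) * P (H y)))) (𝓝[>] (0:ℝ))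
      (𝓝 s) := (Real.continuous_sqrt.tendsto _).comp (tendsto_const_nhds.mul hPH)
  -- the ratio H'/sqrt(2 P(H)) tends to 1
  have h1 : Tendsto (fun y => H' y / Real.sqrt (2 * P (H y))) (𝓝[>] (0:ℝ)) (𝓝 1) := by
    have hsq : Tendsto (fun y => Real.sqrt ((H' y) ^ 2 / (2 * P (H y)))) (𝓝[>] (0:ℝ))
        (𝓝 1) := by
      have := (Real.continuous_sqrt.tendsto 1).comp hbal
      simpa [Function.comp_def] using this
    apply hsq.congr'
    filter_upwards [hIooMem] with y hy
    rw [Real.sqrt_div (sq_nonneg _), Real.sqrt_sq (hderivpos y hy).le]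
  -- G := H^((m+1)/2)
  set G : ℝ → ℝ := fun y => H y ^ ((m+1)/2) with hG
  set G' : ℝ → ℝ := fun y => (m+1)/2 * H y ^ ((m-1)/2) * H' y with hG'
  have hGderiv : ∀ y ∈ Ioo (0:ℝ) δ, HasDerivAt G (G' y) y := by
    intro y hy
    have h := (hderiv y hy).rpow_const (p := (m+1)/2) (Or.inl (hHpos y hy).ne')
    have he : (m+1)/2 - 1 = (m-1)/2 := by ring
    rw [he] at h
    convert h using 1
    simp only [hG']
    ring
  -- G' tends to c
  have hG'lim : Tendsto G' (𝓝[>] (0:ℝ)) (𝓝 c) := by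
    have key : Tendsto (fun y => (m+1)/2 * (H' y / Real.sqrt (2 * P (H y))) *
        Real.sqrt (2 * ((H y) ^ (m-1) * P (H y)))) (𝓝[>] (0:ℝ)) (𝓝 c) := by
      have := ((tendsto_const_nhds (x := (m+1)/2)).mul h1).mul h2
      simpa [hc, mul_comm, mul_assoc, mul_left_comm] using this
    apply key.congr'
    filter_upwards [hIooMem] with y hy
    have hHy : 0 < H y := hHpos y hy
    have hPy : 0 < P (H y) := hPpos _ hHy
    have hD : 0 < Real.sqrt (2 * P (H y)) := Real.sqrt_pos.mpr (by positivity)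
    have hsplit : Real.sqrt (2 * ((H y) ^ (m-1) * P (H y)))
        = H y ^ ((m-1)/2) * Real.sqrt (2 * P (H y)) := by
      have h1' : 2 * ((H y) ^ (m-1) * P (H y)) = (H y) ^ (m-1) * (2 * P (H y)) := by ring
      rw [h1', Real.sqrt_mul (Real.rpow_nonneg hHy.le _)]
      congr 1
      rw [Real.sqrt_eq_rpow, ← Real.rpow_mul hHy.le]
      congr 1
      ring
    rw [hsplit]
    field_simp [hG']
    ring
  -- L'Hopital: G y / y → c
  have hGto0 : Tendsto G (𝓝[>] (0:ℝ)) (𝓝 0) := by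
    have hcont : ContinuousAt (fun t : ℝ => t ^ ((m+1)/2)) 0 :=
      (Real.continuousAt_rpow_const 0 _ (Or.inr (by positivity)))
    have := hcont.tendsto.comp hHto0
    simpa [Function.comp_def, hG, Real.zero_rpow (by positivity : ((m+1)/2 : ℝ) ≠ 0)] using this
  have hlhop : Tendsto (fun y => G y / y) (𝓝[>] (0:ℝ)) (𝓝 c) := by
    apply HasDerivAt.lhopital_zero_right_on_Ioo hδ hGderiv
      (g' := fun _ => (1:ℝ)) (fun y _ => hasDerivAt_id y) (fun y _ => one_ne_zero)
      hGto0 (by simpa using tendsto_id.mono_left nhdsWithin_le_nhds)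
    simpa using hG'lim
  -- conclude
  have hfinal : Tendsto (fun y => (G y / y) ^ (2/(m+1))) (𝓝[>] (0:ℝ))
      (𝓝 (c ^ (2/(m+1)))) := by
    have hcont : ContinuousAt (fun t : ℝ => t ^ (2/(m+1))) c :=
      Real.continuousAt_rpow_const c _ (Or.inl hcpos.ne')
    exact hcont.tendsto.comp hlhop
  have hval : c ^ ((2:ℝ)/(m+1)) = (A * (m+1)^2 / (2*(m-1))) ^ ((1:ℝ)/(m+1)) := by
    have h1' : (2:ℝ)/(m+1) = 2 * (1/(m+1)) := by ring
    rw [h1', Real.rpow_mul hcpos.le]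
    congr 1
    have hsq : s ^ 2 = 2 * (A/(m-1)) := Real.sq_sqrt (by positivity)
    rw [Real.rpow_two]
    have h2' : c ^ 2 = ((m+1)/2)^2 * s^2 := by ring
    rw [h2', hsq]
    field_simp
  rw [← hval]
  apply hfinal.congr'
  filter_upwards [hIooMem] with y hy
  have hHy : 0 < H y := hHpos y hy
  have hy0 : 0 < y := hy.1
  rw [Real.div_rpow (by positivity) hy0.le]
  congr 1
  simp only [hG]
  rw [← Real.rpow_mul hHy.le,
    show (m+1)/2 * (2/(m+1)) = 1 by field_simp, Real.rpow_one]
end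

section
/- Let U ∈ ℝ, let P : (0,∞) → ℝ be twice continuously differentiable, let 0 < a < b and δ > 0, and let H : (0,δ) → (a,b) be three times continuously differentiable with H' > 0, admitting a differentiable two-sided inverse Y : (a,b) → (0,δ) (H(Y(s)) = s and Y(H(y)) = y). Define ψ : (a,b) → ℝ by ψ(s) = ½·H'(Y(s))². If U + H(y)²·(H'''(y) − P''(H(y))·H'(y)) = 0 for all y ∈ (0,δ), then ψ is twice differentiable and s²·ψ''(s) = −U/√(2ψ(s)) + s²·P''(s) for all s ∈ (a,b). -/
open MeasureTheory Filter Set Topology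

theorem travelling_wave_hodograph_equation
    (U a b δ : ℝ) (ha : 0 < a) (hab : a < b) (hδ : 0 < δ)
    (P : ℝ → ℝ) (hP : ContDiffOn ℝ 2 P (Set.Ioi 0))
    (H Y : ℝ → ℝ)
    (hH : ContDiffOn ℝ 3 H (Set.Ioo 0 δ))
    (hHmem : ∀ y ∈ Set.Ioo (0:ℝ) δ, H y ∈ Set.Ioo a b)
    (hH' : ∀ y ∈ Set.Ioo (0:ℝ) δ, 0 < deriv H y)
    (hYmem : ∀ s ∈ Set.Ioo a b, Y s ∈ Set.Ioo (0:ℝ) δ)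
    (hYdiff : ∀ s ∈ Set.Ioo a b, DifferentiableAt ℝ Y s)
    (hHY : ∀ s ∈ Set.Ioo a b, H (Y s) = s)
    (hYH : ∀ y ∈ Set.Ioo (0:ℝ) δ, Y (H y) = y)
    (ψ : ℝ → ℝ) (hψ : ∀ s, ψ s = (1/2) * (deriv H (Y s)) ^ 2)
    (hode : ∀ y ∈ Set.Ioo (0:ℝ) δ,
      U + (H y) ^ 2 * (deriv (deriv (deriv H)) y - deriv (deriv P) (H y) * deriv H y) = 0) :
    ∀ s ∈ Set.Ioo a b, DifferentiableAt ℝ ψ s ∧ DifferentiableAt ℝ (deriv ψ) s ∧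
      s ^ 2 * deriv (deriv ψ) s = -U / Real.sqrt (2 * ψ s) + s ^ 2 * deriv (deriv P) s := by
  have hopen : IsOpen (Set.Ioo (0:ℝ) δ) := isOpen_Ioo
  have hH1 : ContDiffOn ℝ 2 (deriv H) (Set.Ioo 0 δ) :=
    hH.deriv_of_isOpen hopen (by norm_num)
  have hH2 : ContDiffOn ℝ 1 (deriv (deriv H)) (Set.Ioo 0 δ) :=
    hH1.deriv_of_isOpen hopen (by norm_num)
  -- derivative of Y
  have hderivY : ∀ t ∈ Set.Ioo a b, deriv Y t = 1 / deriv H (Y t) := by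
    intro t ht
    have hyt := hYmem t ht
    have hdH0 : DifferentiableAt ℝ H (Y t) :=
      (hH.contDiffAt (hopen.mem_nhds hyt)).differentiableAt (by norm_num)
    have hY' : HasDerivAt Y (deriv Y t) t := (hYdiff t ht).hasDerivAt
    have hchain : HasDerivAt (fun u => H (Y u)) (deriv H (Y t) * deriv Y t) t :=
      hdH0.hasDerivAt.comp t hY'
    have heq : (fun u => H (Y u)) =ᶠ[𝓝 t] id := by
      filter_upwards [isOpen_Ioo.mem_nhds ht] with u hu using hHY u hu
    have hid : HasDerivAt (fun u => H (Y u)) 1 t :=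
      (hasDerivAt_id t).congr_of_eventuallyEq heq
    have huniq : deriv H (Y t) * deriv Y t = 1 := hchain.unique hid
    have hpos : (0:ℝ) < deriv H (Y t) := hH' _ hyt
    field_simp
    linarith [huniq]
  -- ψ has derivative H'' ∘ Y on Ioo a b
  have key : ∀ t ∈ Set.Ioo a b, HasDerivAt ψ (deriv (deriv H) (Y t)) t := by
    intro t ht
    have hyt := hYmem t ht
    have hdH1 : DifferentiableAt ℝ (deriv H) (Y t) :=
      (hH1.contDiffAt (hopen.mem_nhds hyt)).differentiableAt (by norm_num)
    have hY' : HasDerivAt Y (deriv Y t) t := (hYdiff t ht).hasDerivAt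
    have h1 : HasDerivAt (fun u => deriv H (Y u)) (deriv (deriv H) (Y t) * deriv Y t) t :=
      hdH1.hasDerivAt.comp t hY'
    have h2 : HasDerivAt (fun u => (1/2) * (deriv H (Y u)) ^ 2)
        ((1/2) * ((2 : ℕ) * (deriv H (Y t)) ^ 1 * (deriv (deriv H) (Y t) * deriv Y t))) t :=
      (h1.pow 2).const_mul (1/2)
    have hψeq : ψ = fun u => (1/2) * (deriv H (Y u)) ^ 2 := funext hψ
    rw [hψeq]
    convert h2 using 1
    rw [hderivY t ht]
    have hpos : (0:ℝ) < deriv H (Y t) := hH' _ hyt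
    field_simp
    norm_num
  intro s hs
  have hyδ : Y s ∈ Set.Ioo (0:ℝ) δ := hYmem s hs
  have hpos : (0:ℝ) < deriv H (Y s) := hH' _ hyδ
  have hψdiff : DifferentiableAt ℝ ψ s := (key s hs).differentiableAt
  have hev : deriv ψ =ᶠ[𝓝 s] fun t => deriv (deriv H) (Y t) := by
    filter_upwards [isOpen_Ioo.mem_nhds hs] with t ht using (key t ht).deriv
  have hdH2 : DifferentiableAt ℝ (deriv (deriv H)) (Y s) :=
    (hH2.contDiffAt (hopen.mem_nhds hyδ)).differentiableAt (by norm_num)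
  have hY' : HasDerivAt Y (deriv Y s) s := (hYdiff s hs).hasDerivAt
  have h3 : HasDerivAt (fun t => deriv (deriv H) (Y t))
      (deriv (deriv (deriv H)) (Y s) * deriv Y s) s := hdH2.hasDerivAt.comp s hY'
  have h4 : HasDerivAt (deriv ψ) (deriv (deriv (deriv H)) (Y s) * deriv Y s) s :=
    h3.congr_of_eventuallyEq hev
  refine ⟨hψdiff, h4.differentiableAt, ?_⟩
  rw [h4.deriv, hderivY s hs]
  -- simplify sqrt
  have hsqrt : Real.sqrt (2 * ψ s) = deriv H (Y s) := by
    rw [hψ s]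
    rw [show 2 * ((1/2) * (deriv H (Y s)) ^ 2) = (deriv H (Y s)) ^ 2 by ring]
    exact Real.sqrt_sq hpos.le
  rw [hsqrt]
  have hode' := hode (Y s) hyδ
  rw [hHY s hs] at hode'
  have hs0 : (0:ℝ) < s := lt_trans ha hs.1
  have hne : deriv H (Y s) ≠ 0 := ne_of_gt hpos
  field_simp
  nlinarith [hode', sq_nonneg s]
end

section
/- Let m > 1, A > 0, Λ ∈ ℝ, s ∈ ℝ, δ > 0, and let P : (0,∞) → (0,∞) be continuously differentiable with t^{m−1}·P(t) → A/(m−1) as t → 0⁺. Let h : (s−δ, s) → (0,∞) be twice continuously differentiable with h' < 0 on (s−δ, s), h(x) → 0 as x → s⁻, and −h''(x) + P'(h(x)) = Λ for all x ∈ (s−δ, s). Then h(x) / (s−x)^{2/(m+1)} → (A(m+1)²/(2(m−1)))^{1/(m+1)} as x → s⁻. -/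
open MeasureTheory Filter Set Topology

theorem steady_state_contact_angle_pi_over_two
    (m A Λ s δ : ℝ) (hm : 1 < m) (hA : 0 < A) (hδ : 0 < δ)
    (P : ℝ → ℝ) (hP : ContDiffOn ℝ 1 P (Set.Ioi 0))
    (hPpos : ∀ t > (0:ℝ), 0 < P t)
    (hPas : Tendsto (fun t => t ^ (m-1) * P t) (𝓝[>] 0) (𝓝 (A/(m-1))))
    (h : ℝ → ℝ) (hh : ContDiffOn ℝ 2 h (Set.Ioo (s-δ) s))
    (hpos : ∀ x ∈ Set.Ioo (s-δ) s, 0 < h x)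
    (hdec : ∀ x ∈ Set.Ioo (s-δ) s, deriv h x < 0)
    (h0 : Tendsto h (𝓝[<] s) (𝓝 0))
    (hode : ∀ x ∈ Set.Ioo (s-δ) s, -(deriv (deriv h) x) + deriv P (h x) = Λ) :
    Tendsto (fun x => h x / (s - x) ^ (2/(m+1))) (𝓝[<] s)
      (𝓝 ((A * (m+1)^2 / (2*(m-1))) ^ (1/(m+1)))) := by
  have hm1 : (0:ℝ) < m - 1 := by linarith
  have hm1' : (0:ℝ) < m + 1 := by linarith
  set I : Set ℝ := Set.Ioo (s-δ) s with hIdef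
  have hI : IsOpen I := isOpen_Ioo
  have hIconv : Convex ℝ I := convex_Ioo _ _
  have hImem : I ∈ 𝓝[<] s := Ioo_mem_nhdsLT (by linarith)
  have hxI : ∀ᶠ x in 𝓝[<] s, x ∈ I := hImem
  -- basic differentiability
  have hd1 : ∀ x ∈ I, HasDerivAt h (deriv h x) x := by
    intro x hx
    exact ((hh.differentiableOn (by norm_num)).differentiableAt
      (hI.mem_nhds hx)).hasDerivAt
  have hC1 : ContDiffOn ℝ 1 (deriv h) I := hh.deriv_of_isOpen hI (by norm_num)
  have hd2 : ∀ x ∈ I, HasDerivAt (deriv h) (deriv (deriv h) x) x := by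
    intro x hx
    exact ((hC1.differentiableOn (by norm_num)).differentiableAt
      (hI.mem_nhds hx)).hasDerivAt
  have hPd : ∀ t : ℝ, 0 < t → HasDerivAt P (deriv P t) t := by
    intro t ht
    exact ((hP.differentiableOn (by norm_num)).differentiableAt
      (isOpen_Ioi.mem_nhds ht)).hasDerivAt
  -- energy function
  set E : ℝ → ℝ := fun x => P (h x) - (deriv h x)^2/2 - Λ * h x with hEdef
  have hE : ∀ x ∈ I, HasDerivAt E 0 x := by
    intro x hx
    have h1 := hd1 x hx
    have h2 := hd2 x hx
    have hPh : HasDerivAt (fun x => P (h x)) (deriv P (h x) * deriv h x) x :=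
      (hPd _ (hpos x hx)).comp x h1
    have hsq : HasDerivAt (fun x => (deriv h x)^2/2)
        ((deriv (deriv h) x * deriv h x + deriv h x * deriv (deriv h) x)/2) x := by
      simpa [pow_two] using (h2.mul h2).div_const 2
    have := (hPh.sub hsq).sub (h1.const_mul Λ)
    refine this.congr_deriv ?_
    linear_combination (deriv h x) * hode x hx
  -- E is constant
  have hx0 : s - δ/2 ∈ I := by constructor <;> [linarith; linarith]
  set C : ℝ := E (s - δ/2) with hCdef
  have hconst : ∀ x ∈ I, E x = C := by
    intro x hx
    refine hIconv.is_const_of_fderivWithin_eq_zero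
      (fun y hy => (hE y hy).differentiableAt.differentiableWithinAt) ?_ hx hx0
    intro y hy
    rw [fderivWithin_eq_fderiv (hI.uniqueDiffWithinAt hy) (hE y hy).differentiableAt,
      (hE y hy).hasFDerivAt.fderiv]
    ext
    simp
  -- first integral
  have hfirst : ∀ x ∈ I, (deriv h x)^2 = 2 * P (h x) - 2 * Λ * h x - 2 * C := by
    intro x hx
    have := hconst x hx
    simp only [hEdef] at this
    linear_combination (-2 : ℝ) * this
  -- h tends to 0 within Ioi 0
  have hh0' : Tendsto h (𝓝[<] s) (𝓝[>] 0) := by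
    apply tendsto_nhdsWithin_of_tendsto_nhds_of_eventually_within _ h0
    filter_upwards [hxI] with x hx using hpos x hx
  -- rpow limits
  have hrp : ∀ p : ℝ, 0 < p → Tendsto (fun x => h x ^ p) (𝓝[<] s) (𝓝 0) := by
    intro p hp
    have hc : ContinuousAt (fun t : ℝ => t ^ p) 0 :=
      Real.continuousAt_rpow_const 0 p (Or.inr hp.le)
    have := hc.tendsto.comp h0
    simpa [Real.zero_rpow hp.ne', Function.comp_def] using this
  have hq : Tendsto (fun x => (h x) ^ (m-1) * P (h x)) (𝓝[<] s) (𝓝 (A/(m-1))) :=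
    hPas.comp hh0'
  -- key limit : h^(m-1) * (h')^2 → 2A/(m-1)
  set K : ℝ := 2 * A / (m - 1) with hKdef
  have hKpos : 0 < K := by positivity
  have hkey : Tendsto (fun x => (h x)^(m-1) * (deriv h x)^2) (𝓝[<] s) (𝓝 K) := by
    have hlim : Tendsto (fun x => 2 * ((h x)^(m-1) * P (h x))
        - 2 * Λ * ((h x)^(m-1) * h x) - 2 * C * (h x)^(m-1)) (𝓝[<] s)
        (𝓝 (2 * (A/(m-1)) - 2 * Λ * (0 * 0) - 2 * C * 0)) := by
      refine Tendsto.sub (Tendsto.sub ?_ ?_) ?_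
      · exact hq.const_mul 2
      · exact ((hrp (m-1) hm1).mul h0).const_mul _
      · exact (hrp (m-1) hm1).const_mul _
    have heq : (2 * (A/(m-1)) - 2 * Λ * (0 * 0) - 2 * C * 0) = K := by
      rw [hKdef]; ring
    rw [heq] at hlim
    refine hlim.congr' ?_
    filter_upwards [hxI] with x hx
    rw [hfirst x hx]; ring
  -- u := h^((m-1)/2) * (-h') tends to √K
  set u : ℝ → ℝ := fun x => (h x) ^ ((m-1)/2) * (-(deriv h x)) with hudef
  have husq : ∀ x ∈ I, u x ^ 2 = (h x)^(m-1) * (deriv h x)^2 := by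
    intro x hx
    have hhx := (hpos x hx).le
    simp only [hudef]
    rw [mul_pow, neg_pow, ← Real.rpow_natCast ((h x) ^ ((m-1)/2)) 2,
      ← Real.rpow_mul hhx]
    norm_num
  have hunn : ∀ x ∈ I, 0 ≤ u x := by
    intro x hx
    have h1 := hdec x hx
    have h2 := Real.rpow_nonneg (hpos x hx).le ((m-1)/2)
    simp only [hudef]
    exact mul_nonneg h2 (by linarith)
  have hu : Tendsto u (𝓝[<] s) (𝓝 (Real.sqrt K)) := by
    have h2 : Tendsto (fun x => Real.sqrt (u x ^ 2)) (𝓝[<] s) (𝓝 (Real.sqrt K)) := by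
      apply (Real.continuous_sqrt.continuousAt.tendsto).comp
      refine Tendsto.congr' ?_ hkey
      filter_upwards [hxI] with x hx using (husq x hx).symm
    refine h2.congr' ?_
    filter_upwards [hxI] with x hx
    rw [Real.sqrt_sq (hunn x hx)]
  have hsqrtKpos : 0 < Real.sqrt K := Real.sqrt_pos.mpr hKpos
  -- φ := h^((m+1)/2), L'Hôpital
  set φ : ℝ → ℝ := fun x => (h x) ^ ((m+1)/2) with hφdef
  set f' : ℝ → ℝ := fun x => ((m+1)/2) * (h x) ^ ((m-1)/2) * deriv h x with hf'def
  have hφd : ∀ x ∈ I, HasDerivAt φ (f' x) x := by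
    intro x hx
    have hr : HasDerivAt (fun t : ℝ => t ^ ((m+1)/2))
        (((m+1)/2) * (h x) ^ ((m+1)/2 - 1)) (h x) :=
      Real.hasDerivAt_rpow_const (Or.inl (hpos x hx).ne')
    have := hr.comp x (hd1 x hx)
    have hexp : (m+1)/2 - 1 = (m-1)/2 := by ring
    rw [hexp] at this
    simpa [hf'def, mul_assoc, Function.comp_def] using this
  set L : ℝ := ((m+1)/2) * Real.sqrt K with hLdef
  have hLpos : 0 < L := by positivity
  have hlhop : Tendsto (fun x => φ x / (s - x)) (𝓝[<] s) (𝓝 L) := by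
    apply HasDerivAt.lhopital_zero_nhdsLT (f' := f') (g' := fun _ => (-1 : ℝ))
    · filter_upwards [hxI] with x hx using hφd x hx
    · filter_upwards with x
      simpa using (hasDerivAt_id x).const_sub s
    · filter_upwards with x; norm_num
    · exact hrp ((m+1)/2) (by linarith)
    · have : Tendsto (fun x : ℝ => s - x) (𝓝 s) (𝓝 (s - s)) :=
        (continuous_const.sub continuous_id).tendsto s
      simpa using this.mono_left nhdsWithin_le_nhds
    · have : Tendsto (fun x => ((m+1)/2) * u x) (𝓝[<] s) (𝓝 L) := by
        rw [hLdef]; exact hu.const_mul _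
      refine this.congr ?_
      intro x
      simp only [hf'def, hudef]
      ring
  -- conclude
  have hfin : Tendsto (fun x => (φ x / (s - x)) ^ (2/(m+1))) (𝓝[<] s)
      (𝓝 (L ^ (2/(m+1)))) := by
    exact ((Real.continuousAt_rpow_const L (2/(m+1)) (Or.inl hLpos.ne')).tendsto).comp hlhop
  have hval : L ^ ((2:ℝ)/(m+1)) = (A * (m+1)^2 / (2*(m-1))) ^ (1/(m+1)) := by
    have hL2 : L ^ (2:ℕ) = A * (m+1)^2 / (2*(m-1)) := by
      have hs2 : Real.sqrt K ^ 2 = K := Real.sq_sqrt hKpos.le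
      rw [hLdef, mul_pow, hs2, hKdef]
      field_simp
    have : ((2:ℝ)/(m+1)) = 2 * (1/(m+1)) := by ring
    rw [this, Real.rpow_mul hLpos.le, Real.rpow_two, ← hL2]
  rw [← hval]
  refine hfin.congr' ?_
  filter_upwards [hxI] with x hx
  have hhx : 0 ≤ h x := (hpos x hx).le
  have hsx : 0 ≤ s - x := by have := hx.2; simp only [hIdef, Set.mem_Ioo] at hx; linarith
  simp only [hφdef]
  rw [Real.div_rpow (Real.rpow_nonneg hhx _) hsx, ← Real.rpow_mul hhx,
    (show (m+1)/2 * (2/(m+1)) = 1 by field_simp), Real.rpow_one]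
end

section
/- Let U > 0, a ∈ ℝ, y₁ > 0, and let H : [y₁, ∞) → (0,∞) be continuously differentiable and strictly increasing with H(y) → +∞ as y → +∞ and H'(y) > 0. Suppose there is a constant K such that for all large y: | H'(y)³/(3U) − log H(y) + (1/3)·log log H(y) − a | ≤ K · log log H(y) / log H(y). Then H'(y)³/(3U) − log( (3U)^{1/3} · y ) − a → 0 as y → +∞. -/
open MeasureTheory Filter Set Topology


lemma tendsto_div_atTop_of_eventually_hasDerivAt
    (f f' : ℝ → ℝ) (c : ℝ)
    (hf : ∀ᶠ y in atTop, HasDerivAt f (f' y) y)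
    (hf' : Tendsto f' atTop (𝓝 c)) :
    Tendsto (fun y => f y / y) atTop (𝓝 c) := by
  rw [Metric.tendsto_atTop]
  intro ε hε
  have h1 : ∀ᶠ y in atTop, HasDerivAt f (f' y) y ∧ |f' y - c| ≤ ε/2 := by
    filter_upwards [hf, hf' (Metric.closedBall_mem_nhds c (half_pos hε))] with y h1 h2
    exact ⟨h1, by simpa [Real.dist_eq, Metric.mem_closedBall] using h2⟩
  obtain ⟨Y₀, hY₀⟩ := eventually_atTop.mp h1
  set Y := max Y₀ 1 with hYdef
  have hY1 : (1:ℝ) ≤ Y := le_max_right _ _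
  have hkey : ∀ x ∈ Set.Ici Y, |(f x - c*x) - (f Y - c*Y)| ≤ ε/2 * |x - Y| := by
    intro x hx
    have hd : ∀ z ∈ Set.Ici Y, HasDerivWithinAt (fun y => f y - c*y) (f' z - c) (Set.Ici Y) z := by
      intro z hz
      have h := (hY₀ z (le_trans (le_max_left _ _) hz)).1
      exact (h.sub (by simpa using (hasDerivAt_id z).const_mul c)).hasDerivWithinAt
    have hb : ∀ z ∈ Set.Ici Y, ‖f' z - c‖ ≤ ε/2 := fun z hz => by
      simpa [Real.norm_eq_abs] using (hY₀ z (le_trans (le_max_left _ _) hz)).2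
    have := Convex.norm_image_sub_le_of_norm_hasDerivWithin_le hd hb (convex_Ici Y)
      Set.self_mem_Ici hx
    simpa [Real.norm_eq_abs] using this
  refine ⟨max Y (2*|f Y - c*Y|/ε) + 1, fun y hy => ?_⟩
  have hyY : Y ≤ y := le_trans (le_trans (le_max_left _ _) (by linarith)) le_rfl
  have hy0 : 0 < y := by linarith
  have hM : 2*|f Y - c*Y|/ε + 1 ≤ y := le_trans (by gcongr; exact le_max_right _ _) hy
  have h2 : |(f y - c*y) - (f Y - c*Y)| ≤ ε/2 * y := by
    refine le_trans (hkey y (Set.mem_Ici.mpr hyY)) ?_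
    have : |y - Y| ≤ y := by rw [abs_of_nonneg (by linarith)]; linarith
    gcongr
  have h3 : |f y - c*y| ≤ ε/2*y + |f Y - c*Y| := by
    have := abs_add_le ((f y - c*y) - (f Y - c*Y)) (f Y - c*Y)
    simp only [sub_add_cancel] at this
    linarith
  have hεy : 2*|f Y - c*Y| + ε ≤ ε * y := by
    have h := (div_le_iff₀ hε).mp (by linarith : 2*|f Y - c*Y|/ε ≤ y - 1)
    nlinarith
  rw [Real.dist_eq]
  have hgoal : |f y / y - c| = |f y - c*y| / y := by
    rw [show f y / y - c = (f y - c*y)/y from by field_simp, abs_div, abs_of_pos hy0]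
  rw [hgoal, div_lt_iff₀ hy0]
  nlinarith [abs_nonneg (f Y - c*Y)]

set_option maxHeartbeats 1000000 in

theorem linear_log_front_bulk_behaviour
    (U a y₁ : ℝ) (hU : 0 < U) (hy₁ : 0 < y₁)
    (H : ℝ → ℝ) (hH : ContDiffOn ℝ 1 H (Set.Ici y₁))
    (hmono : StrictMonoOn H (Set.Ici y₁))
    (hinf : Tendsto H atTop atTop)
    (hder : ∀ y ≥ y₁, 0 < deriv H y)
    (hexp : ∃ K : ℝ, ∀ᶠ y in atTop,
      |(deriv H y) ^ 3 / (3*U) - Real.log (H y) + (1/3) * Real.log (Real.log (H y)) - a| ≤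
        K * Real.log (Real.log (H y)) / Real.log (H y)) :
    Tendsto (fun y => (deriv H y) ^ 3 / (3*U) - Real.log ((3*U) ^ ((1:ℝ)/3) * y) - a)
      atTop (𝓝 0) := by
  obtain ⟨K, hK⟩ := hexp
  have hφtop : Tendsto (fun y => Real.log (H y)) atTop atTop :=
    Real.tendsto_log_atTop.comp hinf
  have hlogdiv : Tendsto (fun x : ℝ => Real.log x / x) atTop (𝓝 0) :=
    Real.isLittleO_log_id_atTop.tendsto_div_nhds_zero
  have hφinv : Tendsto (fun y => (Real.log (H y))⁻¹) atTop (𝓝 0) :=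
    tendsto_inv_atTop_zero.comp hφtop
  -- Step 1: the error term tends to 0
  have hE : Tendsto (fun y => (deriv H y) ^ 3 / (3*U) - Real.log (H y)
      + (1/3) * Real.log (Real.log (H y)) - a) atTop (𝓝 0) := by
    apply squeeze_zero_norm' (by simpa [Real.norm_eq_abs] using hK)
    have := (hlogdiv.comp hφtop).const_mul K
    simpa [Function.comp, mul_div_assoc, mul_zero] using this
  -- Step 2: u / φ → 1
  have hu1 : Tendsto (fun y => ((deriv H y) ^ 3 / (3*U)) / Real.log (H y)) atTop (𝓝 1) := by
    have hS : Tendsto (fun y => 1 + (((deriv H y) ^ 3 / (3*U) - Real.log (H y)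
        + (1/3) * Real.log (Real.log (H y)) - a) * (Real.log (H y))⁻¹
        - (1/3) * (Real.log (Real.log (H y)) * (Real.log (H y))⁻¹)
        + a * (Real.log (H y))⁻¹)) atTop (𝓝 (1 + (0 * 0 - 1/3 * 0 + a * 0))) := by
      refine tendsto_const_nhds.add (((hE.mul hφinv).sub (Tendsto.const_mul _ ?_)).add
        (hφinv.const_mul a))
      have := hlogdiv.comp hφtop
      simpa [Function.comp_def, div_eq_mul_inv] using this
    rw [show (1:ℝ) + (0 * 0 - 1/3 * 0 + a * 0) = 1 by ring_nf] at hS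
    refine hS.congr' ?_
    filter_upwards [hφtop.eventually_gt_atTop 1] with y hφ
    have hφne : Real.log (H y) ≠ 0 := by linarith
    field_simp
    ring
  -- notation-free abbreviations via eventual facts
  have hc0 : (0:ℝ) < (3*U) ^ ((1:ℝ)/3) := Real.rpow_pos_of_pos (by linarith) _
  -- Step 3: G has derivative G'
  have hGderiv : ∀ᶠ y in atTop, HasDerivAt (fun z => H z / (Real.log (H z)) ^ ((1:ℝ)/3))
      ((deriv H y * (Real.log (H y)) ^ ((1:ℝ)/3)
        - H y * (deriv H y / H y * (1/3) * (Real.log (H y)) ^ ((1:ℝ)/3 - 1)))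
        / ((Real.log (H y)) ^ ((1:ℝ)/3)) ^ 2) y := by
    filter_upwards [eventually_gt_atTop y₁, hinf.eventually_gt_atTop 1,
      hφtop.eventually_gt_atTop 1] with y hy hH1 hφ1
    have hdH : HasDerivAt H (deriv H y) y :=
      ((hH.differentiableOn one_ne_zero).differentiableAt (Ici_mem_nhds hy)).hasDerivAt
    have hHne : H y ≠ 0 := by linarith
    have hφpos : (0:ℝ) < Real.log (H y) := by linarith
    have hlog : HasDerivAt (fun z => Real.log (H z)) (deriv H y / H y) y := hdH.log hHne
    have hψ := hlog.rpow_const (p := (1:ℝ)/3) (Or.inl (ne_of_gt hφpos))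
    exact hdH.div hψ (ne_of_gt (Real.rpow_pos_of_pos hφpos _))
  -- Step 4: G' → c
  have hT : Tendsto (fun y => (3*U*(((deriv H y) ^ 3 / (3*U)) / Real.log (H y))) ^ ((1:ℝ)/3)
      * (1 - 1/(3 * Real.log (H y)))) atTop (𝓝 ((3*U) ^ ((1:ℝ)/3))) := by
    have h3 : Tendsto (fun y => 3*U*(((deriv H y) ^ 3 / (3*U)) / Real.log (H y)))
        atTop (𝓝 (3*U)) := by
      have := hu1.const_mul (3*U)
      simpa using this
    have h4 : Tendsto (fun y => (3*U*(((deriv H y) ^ 3 / (3*U)) / Real.log (H y))) ^ ((1:ℝ)/3))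
        atTop (𝓝 ((3*U) ^ ((1:ℝ)/3))) :=
      (Real.continuousAt_rpow_const _ _ (Or.inl (by positivity))).tendsto.comp h3
    have h5 : Tendsto (fun y => 1 - 1/(3 * Real.log (H y))) atTop (𝓝 (1 - 0)) := by
      refine tendsto_const_nhds.sub ?_
      refine (tendsto_inv_atTop_zero.comp
        (hφtop.const_mul_atTop (by norm_num : (0:ℝ) < 3))).congr fun y => ?_
      simp [Function.comp, one_div]
    have := h4.mul h5
    simpa using this
  have hG' : Tendsto (fun y => (deriv H y * (Real.log (H y)) ^ ((1:ℝ)/3)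
        - H y * (deriv H y / H y * (1/3) * (Real.log (H y)) ^ ((1:ℝ)/3 - 1)))
        / ((Real.log (H y)) ^ ((1:ℝ)/3)) ^ 2) atTop (𝓝 ((3*U) ^ ((1:ℝ)/3))) := by
    refine hT.congr' ?_
    filter_upwards [eventually_ge_atTop y₁, hinf.eventually_gt_atTop 1,
      hφtop.eventually_gt_atTop 1] with y hy hH1 hφ1
    have hdpos : 0 < deriv H y := hder y hy
    have hHpos : (0:ℝ) < H y := by linarith
    have hφpos : (0:ℝ) < Real.log (H y) := by linarith
    have hψpos : (0:ℝ) < (Real.log (H y)) ^ ((1:ℝ)/3) := Real.rpow_pos_of_pos hφpos _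
    have key1 : 3*U*(((deriv H y) ^ 3 / (3*U)) / Real.log (H y))
        = (deriv H y) ^ 3 / Real.log (H y) := by
      field_simp
    have key2 : ((deriv H y) ^ 3 / Real.log (H y)) ^ ((1:ℝ)/3)
        = deriv H y / (Real.log (H y)) ^ ((1:ℝ)/3) := by
      rw [Real.div_rpow (by positivity) hφpos.le]
      congr 1
      rw [← Real.rpow_natCast (deriv H y) 3, ← Real.rpow_mul hdpos.le]
      norm_num
    have key3 : (Real.log (H y)) ^ ((1:ℝ)/3 - 1)
        = (Real.log (H y)) ^ ((1:ℝ)/3) / Real.log (H y) := by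
      rw [Real.rpow_sub hφpos, Real.rpow_one]
    rw [key1, key2, key3]
    have hψne : (Real.log (H y)) ^ ((1:ℝ)/3) ≠ 0 := ne_of_gt hψpos
    have hφne : Real.log (H y) ≠ 0 := ne_of_gt hφpos
    have hHne : H y ≠ 0 := ne_of_gt hHpos
    field_simp
  -- Step 5: G y / y → c
  have hGy : Tendsto (fun y => (H y / (Real.log (H y)) ^ ((1:ℝ)/3)) / y) atTop
      (𝓝 ((3*U) ^ ((1:ℝ)/3))) :=
    tendsto_div_atTop_of_eventually_hasDerivAt _ _ _ hGderiv hG'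
  -- Step 6: log(G/(c y)) → 0
  have hr1 : Tendsto (fun y => (H y / (Real.log (H y)) ^ ((1:ℝ)/3)) / ((3*U) ^ ((1:ℝ)/3) * y))
      atTop (𝓝 1) := by
    have := hGy.div_const ((3*U) ^ ((1:ℝ)/3))
    rw [div_self (ne_of_gt hc0)] at this
    refine this.congr fun y => ?_
    rw [div_div, mul_comm]
  have hB : Tendsto (fun y => Real.log ((H y / (Real.log (H y)) ^ ((1:ℝ)/3))
      / ((3*U) ^ ((1:ℝ)/3) * y))) atTop (𝓝 0) := by
    have := (Real.continuousAt_log one_ne_zero).tendsto.comp hr1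
    simpa [Function.comp_def] using this
  have hB2 : Tendsto (fun y => Real.log (H y) - (1/3) * Real.log (Real.log (H y))
      - Real.log ((3*U) ^ ((1:ℝ)/3) * y)) atTop (𝓝 0) := by
    refine hB.congr' ?_
    filter_upwards [eventually_gt_atTop 0, hinf.eventually_gt_atTop 1,
      hφtop.eventually_gt_atTop 1] with y hy0 hH1 hφ1
    have hHpos : (0:ℝ) < H y := by linarith
    have hφpos : (0:ℝ) < Real.log (H y) := by linarith
    have hψpos : (0:ℝ) < (Real.log (H y)) ^ ((1:ℝ)/3) := Real.rpow_pos_of_pos hφpos _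
    have hGpos : (0:ℝ) < H y / (Real.log (H y)) ^ ((1:ℝ)/3) := by positivity
    rw [Real.log_div (ne_of_gt hGpos) (by positivity), Real.log_div (ne_of_gt hHpos)
      (ne_of_gt hψpos), Real.log_rpow hφpos]
  -- Final assembly
  have := hE.add hB2
  rw [add_zero] at this
  refine this.congr fun y => ?_
  ring
end
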